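/- arXiv:1505.04479 — 4 statements merged into one kernel-verified Lean document; each statement's English description precedes it below -/
import Mathlib

section
/- For all integers n and k with 2 ≤ k ≤ n, the number of permutations in S_n with empty peak set that end with an ascent to k is |P(∅;n)^{↗k}| = 2^{k−2}. -/
open Equiv

/-- Position `i` (1-based, with `1 < i < n`) is a peak of the permutation `π ∈ S_n`.
The value of `π` at 1-based position `j` is `π ⟨j - 1, _⟩`; values are 0-based
(`π i = v` means the written value is `v + 1`). -/
def IsPeak {n : ℕ} (π : Equiv.Perm (Fin n)) (i : ℕ) : Prop :=
  ∃ h : 1 < i ∧ i < n,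
    π ⟨i - 2, by omega⟩ < π ⟨i - 1, by omega⟩ ∧ π ⟨i, by omega⟩ < π ⟨i - 1, by omega⟩

/-- `P(S;n)`: permutations in `S_n` with peak set `S`. -/
def peakSetEq (n : ℕ) (S : Finset ℕ) : Set (Equiv.Perm (Fin n)) :=
  {π | ∀ i : ℕ, IsPeak π i ↔ i ∈ S}

/-- `π` ends with an ascent to `k`: `π_{n-1} < π_n` and `π_n = k` (values written `1..n`). -/
def EndsAscentTo (n k : ℕ) (π : Equiv.Perm (Fin n)) : Prop :=
  ∃ h : 2 ≤ n, π ⟨n - 2, by omega⟩ < π ⟨n - 1, by omega⟩ ∧ ((π ⟨n - 1, by omega⟩ : ℕ) + 1 = k)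

/-- `π` ends with a descent to `k`: `π_{n-1} > π_n` and `π_n = k`. -/
def EndsDescentTo (n k : ℕ) (π : Equiv.Perm (Fin n)) : Prop :=
  ∃ h : 2 ≤ n, π ⟨n - 1, by omega⟩ < π ⟨n - 2, by omega⟩ ∧ ((π ⟨n - 1, by omega⟩ : ℕ) + 1 = k)

/-- `π` ends with an ascent: `π_{n-1} < π_n`. -/
def EndsAscent (n : ℕ) (π : Equiv.Perm (Fin n)) : Prop :=
  ∃ h : 2 ≤ n, π ⟨n - 2, by omega⟩ < π ⟨n - 1, by omega⟩

/-- `π` ends with a descent: `π_{n-1} > π_n`. -/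
def EndsDescent (n : ℕ) (π : Equiv.Perm (Fin n)) : Prop :=
  ∃ h : 2 ≤ n, π ⟨n - 1, by omega⟩ < π ⟨n - 2, by omega⟩

/-- `P(S;n)^{↗k}` -/
def ascTo (n : ℕ) (S : Finset ℕ) (k : ℕ) : Set (Equiv.Perm (Fin n)) :=
  {π ∈ peakSetEq n S | EndsAscentTo n k π}

/-- `P(S;n)_{↘k}` -/
def descTo (n : ℕ) (S : Finset ℕ) (k : ℕ) : Set (Equiv.Perm (Fin n)) :=
  {π ∈ peakSetEq n S | EndsDescentTo n k π}

/-- `overline{P(S;n)}`: elements of `P(S;n)` ending with an ascent. -/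
def overlineP (n : ℕ) (S : Finset ℕ) : Set (Equiv.Perm (Fin n)) :=
  {π ∈ peakSetEq n S | EndsAscent n π}

/-- `underline{P(S;n)}`: elements of `P(S;n)` ending with a descent. -/
def underlineP (n : ℕ) (S : Finset ℕ) : Set (Equiv.Perm (Fin n)) :=
  {π ∈ peakSetEq n S | EndsDescent n π}

/-- Type `C_n` mirrored permutations: `τ_{2n-i+1} = 2n - τ_i + 1` for all `1 ≤ i ≤ 2n`
(1-based); equivalently `τ (j.rev) = (τ j).rev` in 0-based `Fin (2*n)` terms. -/
def mirroredC (n : ℕ) : Set (Equiv.Perm (Fin (2 * n))) :=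
  {τ | ∀ j, τ j.rev = (τ j).rev}

/-- Type `D_n` mirrored permutations: mirrored, and the first `n` positions carry an even
number of values from `{n+1, …, 2n}` (i.e. 0-based values `≥ n`). -/
def mirroredD (n : ℕ) : Set (Equiv.Perm (Fin (2 * n))) :=
  {τ | (∀ j, τ j.rev = (τ j).rev) ∧
    Even ((Finset.univ.filter fun j : Fin (2 * n) => (j : ℕ) < n ∧ n ≤ (τ j : ℕ)).card)}

/-- The pattern bundle `𝒞_n(π)`: mirrored permutations whose first `n` entries have the
same relative order as `π`. -/
def bundleC (n : ℕ) (π : Equiv.Perm (Fin n)) : Set (Equiv.Perm (Fin (2 * n))) :=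
  {τ ∈ mirroredC n | ∀ i j : Fin n,
    τ (Fin.castLE (by omega) i) < τ (Fin.castLE (by omega) j) ↔ π i < π j}

/-- The pattern bundle `𝒟_n(π)`. -/
def bundleD (n : ℕ) (π : Equiv.Perm (Fin n)) : Set (Equiv.Perm (Fin (2 * n))) :=
  {τ ∈ mirroredD n | ∀ i j : Fin n,
    τ (Fin.castLE (by omega) i) < τ (Fin.castLE (by omega) j) ↔ π i < π j}

/-- Position `i` (1-based, `1 < i < n`) is a peak of the first `n` entries of `τ`. -/
def IsPeakFirst (n : ℕ) (τ : Equiv.Perm (Fin (2 * n))) (i : ℕ) : Prop :=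
  ∃ h : 1 < i ∧ i < n,
    τ ⟨i - 2, by omega⟩ < τ ⟨i - 1, by omega⟩ ∧ τ ⟨i, by omega⟩ < τ ⟨i - 1, by omega⟩

/-- `P_C(S;n)`: mirrored permutations of type `C_n` whose first `n` entries have peak set `S`. -/
def P_C (n : ℕ) (S : Finset ℕ) : Set (Equiv.Perm (Fin (2 * n))) :=
  {τ ∈ mirroredC n | ∀ i : ℕ, IsPeakFirst n τ i ↔ i ∈ S}

/-- `P_D(S;n)`. -/
def P_D (n : ℕ) (S : Finset ℕ) : Set (Equiv.Perm (Fin (2 * n))) :=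
  {τ ∈ mirroredD n | ∀ i : ℕ, IsPeakFirst n τ i ↔ i ∈ S}

/-- Position `i` (1-based, `1 < i ≤ n`) is a peak of the first `n+1` entries
`τ_1 ⋯ τ_n τ_{n+1}` of `τ` (so a peak at position `n` is possible). -/
def IsPeakHat (n : ℕ) (τ : Equiv.Perm (Fin (2 * n))) (i : ℕ) : Prop :=
  ∃ h : 1 < i ∧ i ≤ n,
    τ ⟨i - 2, by omega⟩ < τ ⟨i - 1, by omega⟩ ∧ τ ⟨i, by omega⟩ < τ ⟨i - 1, by omega⟩

/-- `hat{P}_C(S;n)`: mirrored permutations of type `C_n` such that `τ_1 ⋯ τ_n τ_{n+1}`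
has peak set `S`. -/
def hatPC (n : ℕ) (S : Finset ℕ) : Set (Equiv.Perm (Fin (2 * n))) :=
  {τ ∈ mirroredC n | ∀ i : ℕ, IsPeakHat n τ i ↔ i ∈ S}

/-- `hat{P}_D(S;n)`. -/
def hatPD (n : ℕ) (S : Finset ℕ) : Set (Equiv.Perm (Fin (2 * n))) :=
  {τ ∈ mirroredD n | ∀ i : ℕ, IsPeakHat n τ i ↔ i ∈ S}

/-- `Φ(n,k) = Σ_{i=k}^n C(n,i)`. -/
def Phi (n k : ℕ) : ℕ := ∑ i ∈ Finset.Icc k n, n.choose i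

/-- `Ψ(n,k) = 2^n - Φ(n,k)`. -/
def Psi (n k : ℕ) : ℕ := 2 ^ n - Phi n k

/-- The group `ℬ_n` of signed permutations on `n` letters. -/
def SignedPerms (n : ℕ) : Set (Fin n → ℤ) :=
  {β | (∀ i, 1 ≤ |β i| ∧ |β i| ≤ (n : ℤ)) ∧ Function.Injective fun i => |β i|}

/-- Position `i` (`1 ≤ i ≤ n - 1`) is a peak of the sequence `0, β_1, …, β_n`. -/
def IsPeakB (n : ℕ) (β : Fin n → ℤ) (i : ℕ) : Prop :=
  ∃ h : 1 ≤ i ∧ i < n,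
    (if hi : 2 ≤ i then β ⟨i - 2, by omega⟩ else 0) < β ⟨i - 1, by omega⟩ ∧
      β ⟨i, by omega⟩ < β ⟨i - 1, by omega⟩

/-- `hat{P}_B(R;n)`: signed permutations such that `0, β_1, …, β_n` has peak set `R`. -/
def hatPB (n : ℕ) (R : Finset ℕ) : Set (Fin n → ℤ) :=
  {β ∈ SignedPerms n | ∀ i : ℕ, IsPeakB n β i ↔ i ∈ R}


namespace Stmt0Aux

/-- value of `π` at 0-based position `i`, as a natural number (junk `n` out of range). -/
def pval {n : ℕ} (π : Equiv.Perm (Fin n)) (i : ℕ) : ℕ :=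
  if h : i < n then (π ⟨i, h⟩ : ℕ) else n

lemma pval_eq {n : ℕ} (π : Equiv.Perm (Fin n)) {i : ℕ} (h : i < n) :
    pval π i = (π ⟨i, h⟩ : ℕ) := dif_pos h

lemma pval_lt_n {n : ℕ} (π : Equiv.Perm (Fin n)) {i : ℕ} (h : i < n) :
    pval π i < n := by rw [pval_eq π h]; exact (π ⟨i, h⟩).isLt

lemma pval_inj {n : ℕ} (π : Equiv.Perm (Fin n)) {i j : ℕ} (hi : i < n) (hj : j < n)
    (hij : i ≠ j) : pval π i ≠ pval π j := by
  rw [pval_eq π hi, pval_eq π hj]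
  intro e
  exact hij (congrArg Fin.val (π.injective (Fin.ext e)))

lemma isPeak_iff {n : ℕ} (π : Equiv.Perm (Fin n)) (i : ℕ) :
    IsPeak π i ↔ 1 < i ∧ i < n ∧ pval π (i - 2) < pval π (i - 1) ∧
      pval π i < pval π (i - 1) := by
  constructor
  · rintro ⟨⟨h1, h2⟩, ha, hb⟩
    refine ⟨h1, h2, ?_, ?_⟩
    · rw [pval_eq π (by omega : i - 2 < n), pval_eq π (by omega : i - 1 < n)]
      exact ha
    · rw [pval_eq π h2, pval_eq π (by omega : i - 1 < n)]
      exact hb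
  · rintro ⟨h1, h2, ha, hb⟩
    rw [pval_eq π (by omega : i - 2 < n), pval_eq π (by omega : i - 1 < n)] at ha
    rw [pval_eq π h2, pval_eq π (by omega : i - 1 < n)] at hb
    exact ⟨⟨h1, h2⟩, ha, hb⟩

lemma noPeak_step {n : ℕ} (π : Equiv.Perm (Fin n)) (hπ : π ∈ peakSetEq n ∅) {j : ℕ}
    (hj : j + 2 < n) (h : pval π j < pval π (j + 1)) : pval π (j + 1) < pval π (j + 2) := by
  by_contra hc
  have hne := pval_inj π (by omega : j + 1 < n) hj (by omega)
  have : IsPeak π (j + 2) := by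
    rw [isPeak_iff, show j + 2 - 2 = j by omega, show j + 2 - 1 = j + 1 by omega]
    exact ⟨by omega, by omega, h, by omega⟩
  simpa using (hπ (j + 2)).mp this

lemma noPeak_chain {n : ℕ} (π : Equiv.Perm (Fin n)) (hπ : π ∈ peakSetEq n ∅) :
    ∀ j i : ℕ, i ≤ j → j + 1 < n → pval π i < pval π (i + 1) → pval π j < pval π (j + 1) := by
  intro j
  induction j with
  | zero =>
    intro i hij _ h
    rw [Nat.le_zero] at hij
    subst hij
    exact h
  | succ j ih =>
    intro i hij hj h
    rcases Nat.eq_or_lt_of_le hij with rfl | hlt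
    · exact h
    · exact noPeak_step π hπ (by omega) (ih i (by omega) (by omega) h)

section Structure

variable {n : ℕ} (π : Equiv.Perm (Fin n)) (hπ : π ∈ peakSetEq n ∅)
  {p : ℕ} (hp : p < n) (hv : pval π p = 0)

include hπ hp hv

lemma desc_step : ∀ i : ℕ, i + 1 ≤ p → pval π (i + 1) < pval π i := by
  intro i hi
  by_contra hc
  have hne := pval_inj π (by omega : i < n) (by omega : i + 1 < n) (by omega)
  have hasc : pval π i < pval π (i + 1) := by omega
  have := noPeak_chain π hπ (p - 1) i (by omega) (by omega) hasc
  rw [show p - 1 + 1 = p by omega, hv] at this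
  omega

lemma desc_mono : ∀ j i : ℕ, i < j → j ≤ p → pval π j < pval π i := by
  intro j
  induction j with
  | zero => intro i hij _; omega
  | succ j ih =>
    intro i hij hj
    rcases Nat.eq_or_lt_of_le (Nat.lt_succ_iff.mp hij) with rfl | hlt
    · exact desc_step π hπ hp hv i hj
    · exact lt_trans (desc_step π hπ hp hv j hj) (ih i hlt (by omega))

lemma asc_step : ∀ i : ℕ, p ≤ i → i + 1 < n → pval π i < pval π (i + 1) := by
  have base : p + 1 < n → pval π p < pval π (p + 1) := by
    intro h
    have hne := pval_inj π hp (by omega : p + 1 < n) (by omega)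
    omega
  intro i hi1 hi2
  rcases Nat.eq_or_lt_of_le hi1 with rfl | hlt
  · exact base hi2
  · exact noPeak_chain π hπ i p (by omega) hi2 (base (by omega))

lemma asc_mono : ∀ j i : ℕ, p ≤ i → i < j → j < n → pval π i < pval π j := by
  intro j
  induction j with
  | zero => intro i _ hij _; omega
  | succ j ih =>
    intro i hi hij hj
    rcases Nat.eq_or_lt_of_le (Nat.lt_succ_iff.mp hij) with rfl | hlt
    · exact asc_step π hπ hp hv i hi (by omega)
    · exact lt_trans (ih i hi hlt (by omega)) (asc_step π hπ hp hv j (by omega) (by omega))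

end Structure

lemma card_filter_val_lt (n m : ℕ) (hm : m ≤ n) :
    (Finset.univ.filter fun i : Fin n => (i : ℕ) < m).card = m := by
  have he : (Finset.univ.filter fun i : Fin n => (i : ℕ) < m)
      = (Finset.range m).attachFin (fun v hv => by
          simp only [Finset.mem_range] at hv; omega) := by
    ext a
    simp [Finset.mem_attachFin]
  rw [he, Finset.card_attachFin, Finset.card_range]

section Det

variable {n : ℕ} (π : Equiv.Perm (Fin n)) {p : ℕ}

/-- values in the descending prefix -/
def Lval (p : ℕ) : Finset (Fin n) :=
  (Finset.univ.filter fun i : Fin n => (i : ℕ) < p).image π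

lemma mem_Lval (hn : 0 < n) {w : Fin n} :
    w ∈ Lval π p ↔ pval π.symm (w : ℕ) < p := by
  rw [pval_eq π.symm w.isLt]
  simp only [Lval, Finset.mem_image, Finset.mem_filter, Finset.mem_univ, true_and]
  constructor
  · rintro ⟨i, hi, rfl⟩
    simpa using hi
  · intro h
    exact ⟨π.symm ⟨(w : ℕ), w.isLt⟩, h, by simp⟩

lemma Lval_card (hp : p ≤ n) : (Lval π p).card = p := by
  rw [Lval, Finset.card_image_of_injective _ π.injective, card_filter_val_lt n p hp]

variable (hπ : π ∈ peakSetEq n ∅) (hp : p < n) (hv : pval π p = 0)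

include hπ hp hv in
lemma left_formula {i : Fin n} (hi : (i : ℕ) < p) :
    π i = (Lval π p).orderEmbOfFin (Lval_card π (le_of_lt hp)) ⟨p - 1 - (i : ℕ), by omega⟩ := by
  have hf : ∀ j : Fin p, p - 1 - (j : ℕ) < n := fun j => by omega
  set f : Fin p → Fin n := fun j => π ⟨p - 1 - (j : ℕ), hf j⟩ with hfdef
  have hmem : ∀ j, f j ∈ Lval π p := by
    intro j
    simp only [Lval, Finset.mem_image, Finset.mem_filter, Finset.mem_univ, true_and]
    exact ⟨⟨p - 1 - (j : ℕ), hf j⟩, by simp; omega, rfl⟩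
  have hmono : StrictMono f := by
    intro j j' hjj
    have := desc_mono π hπ hp hv (p - 1 - (j : ℕ)) (p - 1 - (j' : ℕ)) (by omega) (by omega)
    rw [pval_eq π (hf j), pval_eq π (hf j')] at this
    exact this
  have := Finset.orderEmbOfFin_unique (Lval_card π (le_of_lt hp)) hmem hmono
  have h2 : f ⟨p - 1 - (i : ℕ), by omega⟩ = π i := by
    simp only [hfdef]
    congr 1
    exact Fin.ext (by simp; omega)
  rw [← h2, this]

/-- values in the ascending suffix -/
lemma Rval_eq_compl (hn : 0 < n) :
    (Lval π p)ᶜ = (Finset.univ.filter fun i : Fin n => p ≤ (i : ℕ)).image π := by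
  ext w
  rw [Finset.mem_compl, mem_Lval π hn]
  simp only [Finset.mem_image, Finset.mem_filter, Finset.mem_univ, true_and]
  rw [pval_eq π.symm w.isLt]
  constructor
  · intro h
    exact ⟨π.symm ⟨(w : ℕ), w.isLt⟩, by omega, by simp⟩
  · rintro ⟨i, hi, rfl⟩
    simp only [not_lt]
    calc p ≤ (i : ℕ) := hi
    _ = _ := by simp

lemma Rval_card (hp : p ≤ n) (hn : 0 < n) : ((Lval π p)ᶜ).card = n - p := by
  rw [Finset.card_compl, Lval_card π hp, Fintype.card_fin]

include hπ hp hv in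
lemma right_formula {i : Fin n} (hi : p ≤ (i : ℕ)) :
    π i = ((Lval π p)ᶜ).orderEmbOfFin (Rval_card π (le_of_lt hp) (by omega))
      ⟨(i : ℕ) - p, by omega⟩ := by
  have hf : ∀ j : Fin (n - p), p + (j : ℕ) < n := fun j => by omega
  set f : Fin (n - p) → Fin n := fun j => π ⟨p + (j : ℕ), hf j⟩ with hfdef
  have hmem : ∀ j, f j ∈ (Lval π p)ᶜ := by
    intro j
    rw [Rval_eq_compl π (by omega)]
    simp only [Finset.mem_image, Finset.mem_filter, Finset.mem_univ, true_and]
    exact ⟨⟨p + (j : ℕ), hf j⟩, by simp, rfl⟩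
  have hmono : StrictMono f := by
    intro j j' hjj
    have := asc_mono π hπ hp hv (p + (j' : ℕ)) (p + (j : ℕ)) (by omega) (by omega) (hf j')
    rw [pval_eq π (hf j), pval_eq π (hf j')] at this
    exact this
  have := Finset.orderEmbOfFin_unique (Rval_card π (le_of_lt hp) (by omega)) hmem hmono
  have h2 : f ⟨(i : ℕ) - p, by omega⟩ = π i := by
    simp only [hfdef]
    congr 1
    exact Fin.ext (by simp; omega)
  rw [← h2, this]

end Det

/-- uniqueness: a no-peak permutation is determined by its valley position and
its set of prefix values -/
lemma eq_of_Lval_eq {n : ℕ} (π π' : Equiv.Perm (Fin n))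
    (hπ : π ∈ peakSetEq n ∅) (hπ' : π' ∈ peakSetEq n ∅) {p : ℕ} (hp : p < n)
    (hv : pval π p = 0) (hv' : pval π' p = 0) (hL : Lval π p = Lval π' p) : π = π' := by
  apply Equiv.ext
  intro i
  rcases lt_or_ge (i : ℕ) p with hi | hi
  · rw [left_formula π hπ hp hv hi, left_formula π' hπ' hp hv' hi]
    simp only [hL]
  · rw [right_formula π hπ hp hv hi, right_formula π' hπ' hp hv' hi]
    simp only [hL]

def Gmap (n k : ℕ) (π : Equiv.Perm (Fin n)) : Finset ℕ :=
  (Finset.univ.filter fun v : Fin n =>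
    0 < (v : ℕ) ∧ (v : ℕ) + 1 < k ∧ pval π.symm (v : ℕ) < pval π.symm 0).image Fin.val

lemma Gmap_subset (n k : ℕ) (π : Equiv.Perm (Fin n)) :
    Gmap n k π ⊆ Finset.Ico 1 (k - 1) := by
  intro v hv
  simp only [Gmap, Finset.mem_image, Finset.mem_filter, Finset.mem_univ, true_and] at hv
  obtain ⟨w, ⟨h1, h2, _⟩, rfl⟩ := hv
  simp only [Finset.mem_Ico]
  omega

section Shape

variable {n k : ℕ} (π : Equiv.Perm (Fin n)) (hπ : π ∈ ascTo n ∅ k) (hk : 2 ≤ k) (hkn : k ≤ n)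

include hπ in
lemma shape_n2 : 2 ≤ n := hπ.2.choose

include hπ in
lemma shape_peak : π ∈ peakSetEq n ∅ := hπ.1

include hπ in
lemma shape_valley_lt : pval π.symm 0 < n := pval_lt_n π.symm (by have := shape_n2 π hπ; omega)

include hπ in
lemma shape_hv : pval π (pval π.symm 0) = 0 := by
  have hn : 0 < n := by have := shape_n2 π hπ; omega
  rw [pval_eq π (shape_valley_lt π hπ)]
  have : (⟨pval π.symm 0, shape_valley_lt π hπ⟩ : Fin n) = π.symm ⟨0, hn⟩ := by
    apply Fin.ext
    simp [pval_eq π.symm hn]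
  rw [this]
  simp

include hπ in
lemma shape_last : pval π (n - 1) = k - 1 := by
  obtain ⟨hn, _, heq⟩ := hπ.2
  rw [pval_eq π (by omega : n - 1 < n)]
  omega

include hπ in
lemma shape_lastasc : pval π (n - 2) < pval π (n - 1) := by
  obtain ⟨hn, hlt, _⟩ := hπ.2
  rw [pval_eq π (by omega : n - 2 < n), pval_eq π (by omega : n - 1 < n)]
  exact hlt

include hπ in
lemma shape_p_le : pval π.symm 0 ≤ n - 2 := by
  have hn := shape_n2 π hπ
  have hp := shape_valley_lt π hπ
  by_contra hc
  have hpe : pval π.symm 0 = n - 1 := by omega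
  have := desc_step π (shape_peak π hπ) hp (shape_hv π hπ) (n - 2) (by omega)
  rw [show n - 2 + 1 = n - 1 by omega] at this
  exact absurd (shape_lastasc π hπ) (by omega)

include hπ hk hkn in
lemma shape_large (i : ℕ) (hi : i < n) (hki : k ≤ pval π i) : i < pval π.symm 0 := by
  have hn := shape_n2 π hπ
  have hk1 : 1 ≤ k := by omega
  have hp := shape_valley_lt π hπ
  by_contra hc
  rcases Nat.eq_or_lt_of_le (by omega : i ≤ n - 1) with rfl | hlt
  · have := shape_last π hπ
    omega
  · have := asc_mono π (shape_peak π hπ) hp (shape_hv π hπ) (n - 1) i (by omega) (by omega)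
      (by omega)
    have := shape_last π hπ
    omega

include hπ hk hkn in
lemma shape_LvalN :
    (Lval π (pval π.symm 0)).image Fin.val = Gmap n k π ∪ Finset.Ico k n := by
  have hn := shape_n2 π hπ
  have hp := shape_valley_lt π hπ
  have hple := shape_p_le π hπ
  ext v
  simp only [Finset.mem_image, Finset.mem_union, Finset.mem_Ico]
  constructor
  · rintro ⟨w, hw, rfl⟩
    rw [mem_Lval π (by omega)] at hw
    have hw0 : (w : ℕ) ≠ 0 := by
      intro h0
      have : pval π.symm (w : ℕ) = pval π.symm 0 := by rw [h0]
      omega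
    rcases lt_or_ge ((w : ℕ) + 1) k with hcase | hcase
    · left
      simp only [Gmap, Finset.mem_image, Finset.mem_filter, Finset.mem_univ, true_and]
      exact ⟨w, ⟨by omega, hcase, hw⟩, rfl⟩
    · right
      refine ⟨?_, w.isLt⟩
      rcases Nat.eq_or_lt_of_le hcase with heq | hlt
      · -- (w:ℕ) = k - 1, but the value k-1 sits at position n-1 ≥ p
        exfalso
        have hwk : (w : ℕ) = k - 1 := by omega
        have hpos : pval π.symm (w : ℕ) = n - 1 := by
          rw [pval_eq π.symm w.isLt]
          have : (⟨n - 1, by omega⟩ : Fin n) = π.symm ⟨(w : ℕ), w.isLt⟩ := by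
            rw [Equiv.eq_symm_apply]
            apply Fin.ext
            have := shape_last π hπ
            rw [pval_eq π (by omega : n - 1 < n)] at this
            simp [this, hwk]
          rw [← this]
        omega
      · omega
  · intro hcase
    rcases hcase with hg | ⟨hkv, hvn⟩
    · simp only [Gmap, Finset.mem_image, Finset.mem_filter, Finset.mem_univ, true_and] at hg
      obtain ⟨w, ⟨_, _, hpos⟩, rfl⟩ := hg
      exact ⟨w, (mem_Lval π (by omega)).mpr hpos, rfl⟩
    · refine ⟨⟨v, hvn⟩, ?_, rfl⟩
      rw [mem_Lval π (by omega)]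
      apply shape_large π hπ hk hkn (pval π.symm v) (pval_lt_n π.symm hvn)
      rw [pval_eq π.symm hvn, pval_eq π (π.symm ⟨v, hvn⟩).isLt]
      simp [hkv]

end Shape

lemma Gmap_injOn {n k : ℕ} (hk : 2 ≤ k) (hkn : k ≤ n) :
    Set.InjOn (Gmap n k) (ascTo n ∅ k) := by
  intro π hπ π' hπ' hG
  have hLN := shape_LvalN π hπ hk hkn
  have hLN' := shape_LvalN π' hπ' hk hkn
  have hLval : (Lval π (pval π.symm 0)).image Fin.val
      = (Lval π' (pval π'.symm 0)).image Fin.val := by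
    rw [hLN, hLN', hG]
  have hL : Lval π (pval π.symm 0) = Lval π' (pval π'.symm 0) :=
    Finset.image_injective Fin.val_injective hLval
  have hpp : pval π.symm 0 = pval π'.symm 0 := by
    have h1 := Lval_card π (le_of_lt (shape_valley_lt π hπ))
    have h2 := Lval_card π' (le_of_lt (shape_valley_lt π' hπ'))
    rw [← h1, ← h2, hL]
  exact eq_of_Lval_eq π π' (shape_peak π hπ) (shape_peak π' hπ') (shape_valley_lt π hπ)
    (shape_hv π hπ) (by rw [hpp]; exact shape_hv π' hπ') (by rw [hpp] at hL ⊢; exact hL)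

section Construct

variable (n k : ℕ) (s : Finset ℕ)

/-- the set of positions-values on the descending side -/
def LF : Finset (Fin n) :=
  Finset.univ.filter fun w : Fin n => (w : ℕ) ∈ s ∪ Finset.Ico k n

def mC : ℕ := (LF n k s).card

lemma mem_LF {w : Fin n} : w ∈ LF n k s ↔ (w : ℕ) ∈ s ∪ Finset.Ico k n := by
  simp [LF]

lemma RF_card : ((LF n k s)ᶜ).card = n - mC n k s := by
  rw [Finset.card_compl, Fintype.card_fin, mC]

def fC : Fin n → Fin n := fun i =>
  if h : (i : ℕ) < mC n k s then
    (LF n k s).orderEmbOfFin rfl ⟨mC n k s - 1 - (i : ℕ), by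
      have hr : mC n k s = (LF n k s).card := rfl
      omega⟩
  else ((LF n k s)ᶜ).orderEmbOfFin (RF_card n k s) ⟨(i : ℕ) - mC n k s, by
    have := i.isLt
    have hr : ((LF n k s)ᶜ).card = n - mC n k s := RF_card n k s
    omega⟩

lemma fC_left {i : Fin n} (h : (i : ℕ) < mC n k s) :
    fC n k s i = (LF n k s).orderEmbOfFin rfl ⟨mC n k s - 1 - (i : ℕ), by
      have hr : mC n k s = (LF n k s).card := rfl
      omega⟩ :=
  dif_pos h

lemma fC_right {i : Fin n} (h : mC n k s ≤ (i : ℕ)) :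
    fC n k s i = ((LF n k s)ᶜ).orderEmbOfFin (RF_card n k s) ⟨(i : ℕ) - mC n k s, by
      have := i.isLt
      have hr : ((LF n k s)ᶜ).card = n - mC n k s := RF_card n k s
      omega⟩ :=
  dif_neg (by omega)

lemma fC_mem_left {i : Fin n} (h : (i : ℕ) < mC n k s) : fC n k s i ∈ LF n k s := by
  rw [fC_left n k s h]
  exact Finset.orderEmbOfFin_mem _ _ _

lemma fC_mem_right {i : Fin n} (h : mC n k s ≤ (i : ℕ)) : fC n k s i ∈ (LF n k s)ᶜ := by
  rw [fC_right n k s h]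
  exact Finset.orderEmbOfFin_mem _ _ _

lemma fC_inj : Function.Injective (fC n k s) := by
  intro i j hij
  rcases lt_or_ge (i : ℕ) (mC n k s) with hi | hi <;>
    rcases lt_or_ge (j : ℕ) (mC n k s) with hj | hj
  · rw [fC_left n k s hi, fC_left n k s hj] at hij
    have := congrArg Fin.val ((Finset.orderEmbOfFin _ rfl).injective hij)
    simp only [Fin.val_mk] at this
    exact Fin.ext (by omega)
  · exact absurd (hij ▸ fC_mem_left n k s hi) (Finset.mem_compl.mp (fC_mem_right n k s hj))
  · exact absurd (hij.symm ▸ fC_mem_left n k s hj)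
      (Finset.mem_compl.mp (fC_mem_right n k s hi))
  · rw [fC_right n k s hi, fC_right n k s hj] at hij
    have := congrArg Fin.val ((Finset.orderEmbOfFin _ (RF_card n k s)).injective hij)
    simp only [Fin.val_mk] at this
    have hi' := i.isLt
    exact Fin.ext (by omega)

noncomputable def permC : Equiv.Perm (Fin n) :=
  Equiv.ofBijective (fC n k s) (Finite.injective_iff_bijective.mp (fC_inj n k s))

lemma permC_apply (i : Fin n) : permC n k s i = fC n k s i := rfl

lemma pval_permC {i : ℕ} (hi : i < n) : pval (permC n k s) i = (fC n k s ⟨i, hi⟩ : ℕ) := by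
  rw [pval_eq _ hi, permC_apply]

end Construct

section ConstructProps

variable {n k : ℕ} {s : Finset ℕ} (hk : 2 ≤ k) (hkn : k ≤ n) (hs : s ⊆ Finset.Ico 1 (k - 1))

include hk hs in
lemma zero_not_LN : (0 : ℕ) ∉ s ∪ Finset.Ico k n := by
  simp only [Finset.mem_union, Finset.mem_Ico, not_or]
  constructor
  · intro h0
    have := hs h0
    simp only [Finset.mem_Ico] at this
    omega
  · omega

include hk hs in
lemma k1_not_LN : (k - 1 : ℕ) ∉ s ∪ Finset.Ico k n := by
  simp only [Finset.mem_union, Finset.mem_Ico, not_or]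
  constructor
  · intro h0
    have := hs h0
    simp only [Finset.mem_Ico] at this
    omega
  · omega

lemma large_mem_LN {v : ℕ} (hv : k ≤ v) (hvn : v < n) : v ∈ s ∪ Finset.Ico k n := by
  simp only [Finset.mem_union, Finset.mem_Ico]
  right; omega

include hk hkn hs in
lemma mC_le : mC n k s + 2 ≤ n := by
  have hn : 2 ≤ n := le_trans hk hkn
  have h0 : (⟨0, by omega⟩ : Fin n) ∉ LF n k s := by
    rw [mem_LF]
    exact zero_not_LN hk hs
  have hk1 : (⟨k - 1, by omega⟩ : Fin n) ∉ LF n k s := by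
    rw [mem_LF]
    exact k1_not_LN hk hs
  have hne : (⟨0, by omega⟩ : Fin n) ≠ ⟨k - 1, by omega⟩ := by
    intro h
    have := congrArg Fin.val h
    simp only [Fin.val_mk] at this
    omega
  have hcard : (insert (⟨0, by omega⟩ : Fin n) (insert (⟨k - 1, by omega⟩ : Fin n)
      (LF n k s))).card = mC n k s + 2 := by
    rw [Finset.card_insert_of_notMem (by
        simp only [Finset.mem_insert, not_or]
        exact ⟨hne, h0⟩),
      Finset.card_insert_of_notMem hk1]
    rfl
  have := Finset.card_le_univ (insert (⟨0, by omega⟩ : Fin n) (insert (⟨k - 1, by omega⟩ : Fin n)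
      (LF n k s)))
  rw [hcard] at this
  simpa using this

include hk hs in
lemma fC_m_eq_zero (hm : mC n k s < n) : fC n k s ⟨mC n k s, hm⟩ = ⟨0, by omega⟩ := by
  rw [fC_right n k s (by simp)]
  have hz : 0 < n - mC n k s := by omega
  have hidx : (⟨(⟨mC n k s, hm⟩ : Fin n).1 - mC n k s, by
      have := RF_card n k s; omega⟩ : Fin (n - mC n k s)) = ⟨0, hz⟩ := Fin.ext (by simp)
  rw [hidx, Finset.orderEmbOfFin_zero (RF_card n k s) hz]
  apply le_antisymm
  · exact Finset.min'_le _ _ (by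
      rw [Finset.mem_compl, mem_LF]
      exact zero_not_LN hk hs)
  · rw [Fin.le_def]
    simp

include hk hs in
lemma desc_fC (a : ℕ) (ha : a + 1 < n) (ham : a + 1 ≤ mC n k s) :
    pval (permC n k s) (a + 1) < pval (permC n k s) a := by
  rw [pval_permC n k s ha, pval_permC n k s (by omega)]
  rcases Nat.eq_or_lt_of_le ham with heq | hlt
  · rw [show (⟨a + 1, ha⟩ : Fin n) = ⟨mC n k s, by omega⟩ from Fin.ext (by simp [heq]),
      fC_m_eq_zero hk hs (by omega)]
    have hmem := fC_mem_left n k s (i := ⟨a, by omega⟩) (by simp; omega)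
    have : (fC n k s ⟨a, by omega⟩ : ℕ) ≠ 0 := by
      intro h0
      have : fC n k s ⟨a, by omega⟩ = ⟨0, by omega⟩ := Fin.ext (by simpa using h0)
      rw [this, mem_LF] at hmem
      exact zero_not_LN hk hs hmem
    simp only [Fin.val_mk]
    omega
  · rw [fC_left n k s (by simp; omega), fC_left n k s (by simp; omega)]
    have := ((LF n k s).orderEmbOfFin rfl).strictMono (a := ⟨mC n k s - 1 - (a + 1), by
        have hr : mC n k s = (LF n k s).card := rfl; omega⟩)
      (b := ⟨mC n k s - 1 - a, by have hr : mC n k s = (LF n k s).card := rfl; omega⟩)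
      (by rw [Fin.lt_def]; simp; omega)
    rw [Fin.lt_def] at this
    convert this using 3 <;> simp

lemma asc_fC (a : ℕ) (ha : a + 1 < n) (ham : mC n k s ≤ a) :
    pval (permC n k s) a < pval (permC n k s) (a + 1) := by
  rw [pval_permC n k s ha, pval_permC n k s (by omega)]
  rw [fC_right n k s (by simp; omega), fC_right n k s (by simp; omega)]
  have := (((LF n k s)ᶜ).orderEmbOfFin (RF_card n k s)).strictMono
    (a := ⟨a - mC n k s, by have := RF_card n k s; omega⟩)
    (b := ⟨a + 1 - mC n k s, by have := RF_card n k s; omega⟩)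
    (by rw [Fin.lt_def]; simp; omega)
  rw [Fin.lt_def] at this
  convert this using 3 <;> simp

include hk hs in
lemma permC_noPeak : permC n k s ∈ peakSetEq n ∅ := by
  intro i
  simp only [Finset.notMem_empty, iff_false]
  rw [isPeak_iff]
  rintro ⟨h1, h2, hasc, hdesc⟩
  rcases le_or_gt (i - 1) (mC n k s) with hc | hc
  · have := desc_fC (n := n) hk hs (i - 2) (by omega) (by omega)
    rw [show i - 2 + 1 = i - 1 by omega] at this
    omega
  · have := asc_fC (n := n) (k := k) (s := s) (i - 1) (by omega) (by omega)
    rw [show i - 1 + 1 = i by omega] at this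
    omega

include hk hkn hs in
lemma permC_last : pval (permC n k s) (n - 1) = k - 1 := by
  have hn : 2 ≤ n := le_trans hk hkn
  have hm := mC_le hk hkn hs
  rw [pval_permC n k s (by omega), fC_right n k s (by simp; omega)]
  have hz : 0 < n - mC n k s := by omega
  have hidx : (⟨(⟨n - 1, by omega⟩ : Fin n).1 - mC n k s, by
      have := RF_card n k s; omega⟩ : Fin (n - mC n k s)) =
      ⟨n - mC n k s - 1, Nat.sub_lt hz (Nat.succ_pos 0)⟩ := Fin.ext (by simp; omega)
  rw [hidx, Finset.orderEmbOfFin_last (RF_card n k s) hz]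
  have hmax : ((LF n k s)ᶜ).max' (Finset.card_pos.mp ((RF_card n k s).symm ▸ hz)) =
      ⟨k - 1, by omega⟩ := by
    apply le_antisymm
    · apply Finset.max'_le
      intro w hw
      rw [Finset.mem_compl, mem_LF] at hw
      have hwk : (w : ℕ) ≤ k - 1 := by
        by_contra hcon
        exact hw (large_mem_LN (by omega) w.isLt)
      rw [Fin.le_def]
      simpa using hwk
    · apply Finset.le_max'
      rw [Finset.mem_compl, mem_LF]
      exact k1_not_LN hk hs
  rw [hmax]

end ConstructProps

section ConstructProps2

variable {n k : ℕ} {s : Finset ℕ} (hk : 2 ≤ k) (hkn : k ≤ n) (hs : s ⊆ Finset.Ico 1 (k - 1))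

include hk hkn hs in
lemma permC_ends : EndsAscentTo n k (permC n k s) := by
  have hn : 2 ≤ n := le_trans hk hkn
  have hm := mC_le hk hkn hs
  refine ⟨hn, ?_, ?_⟩
  · have := asc_fC (n := n) (k := k) (s := s) (n - 2) (by omega) (by omega)
    rw [show n - 2 + 1 = n - 1 by omega, pval_permC n k s (by omega : n - 2 < n),
      pval_permC n k s (by omega : n - 1 < n)] at this
    rw [Fin.lt_def]
    exact this
  · have := permC_last hk hkn hs
    rw [pval_permC n k s (by omega : n - 1 < n)] at this
    rw [show ((permC n k s) ⟨n - 1, by omega⟩ : ℕ) = (fC n k s ⟨n - 1, by omega⟩ : ℕ) from rfl]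
    omega

include hk hkn hs in
lemma permC_mem : permC n k s ∈ ascTo n ∅ k :=
  ⟨permC_noPeak hk hs, permC_ends hk hkn hs⟩

include hk hkn hs in
lemma permC_valley : pval (permC n k s).symm 0 = mC n k s := by
  have hn : 2 ≤ n := le_trans hk hkn
  have hm := mC_le hk hkn hs
  rw [pval_eq _ (by omega : 0 < n)]
  have h0 : (permC n k s) ⟨mC n k s, by omega⟩ = ⟨0, by omega⟩ := by
    rw [permC_apply]
    exact fC_m_eq_zero hk hs (by omega)
  have : (permC n k s).symm ⟨0, by omega⟩ = ⟨mC n k s, by omega⟩ := by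
    rw [Equiv.symm_apply_eq, h0]
  rw [this]

include hk hkn hs in
lemma Lval_permC : Lval (permC n k s) (mC n k s) = LF n k s := by
  have hn : 2 ≤ n := le_trans hk hkn
  have hm := mC_le hk hkn hs
  apply Finset.eq_of_subset_of_card_le
  · intro w hw
    simp only [Lval, Finset.mem_image, Finset.mem_filter, Finset.mem_univ, true_and] at hw
    obtain ⟨i, hi, rfl⟩ := hw
    rw [permC_apply]
    exact fC_mem_left n k s hi
  · rw [Lval_card _ (by omega)]
    exact le_refl _

include hk hkn hs in
lemma Gmap_permC : Gmap n k (permC n k s) = s := by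
  have hn : 2 ≤ n := le_trans hk hkn
  have hm := mC_le hk hkn hs
  ext v
  simp only [Gmap, Finset.mem_image, Finset.mem_filter, Finset.mem_univ, true_and]
  rw [permC_valley hk hkn hs]
  constructor
  · rintro ⟨w, ⟨hw0, hwk, hpos⟩, rfl⟩
    have : w ∈ Lval (permC n k s) (mC n k s) := (mem_Lval _ (by omega)).mpr hpos
    rw [Lval_permC hk hkn hs, mem_LF] at this
    simp only [Finset.mem_union, Finset.mem_Ico] at this
    rcases this with h | h
    · exact h
    · omega
  · intro hv
    have hvk := hs hv
    simp only [Finset.mem_Ico] at hvk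
    refine ⟨⟨v, by omega⟩, ⟨Nat.lt_of_lt_of_le Nat.zero_lt_one hvk.1, by simp; omega, ?_⟩, rfl⟩
    have : (⟨v, by omega⟩ : Fin n) ∈ Lval (permC n k s) (mC n k s) := by
      rw [Lval_permC hk hkn hs, mem_LF]
      simp only [Finset.mem_union]
      left
      simpa using hv
    rw [mem_Lval _ (by omega)] at this
    simpa using this

end ConstructProps2

end Stmt0Aux

theorem stmt0 (n k : ℕ) (hk : 2 ≤ k) (hkn : k ≤ n) :
    (ascTo n ∅ k).ncard = 2 ^ (k - 2) := by
  classical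
  have hbij : Set.BijOn (Stmt0Aux.Gmap n k) (ascTo n ∅ k)
      (((Finset.Ico 1 (k - 1)).powerset : Finset (Finset ℕ)) : Set (Finset ℕ)) := by
    refine ⟨?_, Stmt0Aux.Gmap_injOn hk hkn, ?_⟩
    · intro π _
      rw [Finset.mem_coe, Finset.mem_powerset]
      exact Stmt0Aux.Gmap_subset n k π
    · intro t ht
      rw [Finset.mem_coe, Finset.mem_powerset] at ht
      exact ⟨Stmt0Aux.permC n k t, Stmt0Aux.permC_mem hk hkn ht, Stmt0Aux.Gmap_permC hk hkn ht⟩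
  calc (ascTo n ∅ k).ncard
      = (Stmt0Aux.Gmap n k '' (ascTo n ∅ k)).ncard :=
        (Set.ncard_image_of_injOn hbij.injOn).symm
    _ = (((Finset.Ico 1 (k - 1)).powerset : Finset (Finset ℕ)) : Set (Finset ℕ)).ncard := by
        rw [hbij.image_eq]
    _ = ((Finset.Ico 1 (k - 1)).powerset).card := Set.ncard_coe_finset _
    _ = 2 ^ (k - 2) := by
        rw [Finset.card_powerset, Nat.card_Ico, show k - 1 - 1 = k - 2 by omega]
end

section
/- For every integer n ≥ 2, exactly one permutation in S_n with empty peak set ends with a descent, i.e. |underline{P(∅;n)}| = 1, and the number of permutations in S_n with empty peak set ending with an ascent is |overline{P(∅;n)}| = 2^{n−1} − 1. -/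
open Equiv

section NoPeak
variable {n : ℕ}

def gfun (T : Finset (Fin n)) (i : Fin n) : Fin n :=
  if hi : (i : ℕ) + T.card + 1 ≤ n then
    Tᶜ.orderEmbOfFin (k := n - T.card) (by simp [Finset.card_compl]) ⟨n - 1 - T.card - i, by omega⟩
  else
    T.orderEmbOfFin rfl ⟨(i : ℕ) - (n - T.card), by have := i.isLt; omega⟩

lemma gfun_inj (T : Finset (Fin n)) : Function.Injective (gfun T) := by
  intro i j hij
  unfold gfun at hij
  split_ifs at hij with hi hj hj
  · apply Fin.ext
    have h3 : n - 1 - T.card - (i : ℕ) = n - 1 - T.card - (j : ℕ) :=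
      congrArg Fin.val ((Tᶜ.orderEmbOfFin _).injective hij)
    omega
  · exact absurd (hij ▸ Finset.orderEmbOfFin_mem Tᶜ _ _)
      (fun h => Finset.mem_compl.mp h (Finset.orderEmbOfFin_mem T rfl _))
  · exact absurd (hij ▸ Finset.orderEmbOfFin_mem T rfl _)
      (fun h => Finset.mem_compl.mp (Finset.orderEmbOfFin_mem Tᶜ _ _) h)
  · apply Fin.ext
    have h3 : (i : ℕ) - (n - T.card) = (j : ℕ) - (n - T.card) :=
      congrArg Fin.val ((T.orderEmbOfFin rfl).injective hij)
    have := i.isLt; have := j.isLt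
    omega

noncomputable def gperm (T : Finset (Fin n)) : Equiv.Perm (Fin n) :=
  Equiv.ofBijective _ (Finite.injective_iff_bijective.mp (gfun_inj T))

lemma gperm_low (T : Finset (Fin n)) (i : ℕ) (h : i + T.card + 1 ≤ n) :
    gperm T ⟨i, by omega⟩ =
      Tᶜ.orderEmbOfFin (k := n - T.card) (by simp [Finset.card_compl]) ⟨n - 1 - T.card - i, by omega⟩ :=
  dif_pos h

lemma gperm_high (T : Finset (Fin n)) (i : ℕ) (h : ¬ (i + T.card + 1 ≤ n)) (hi : i < n) :
    gperm T ⟨i, hi⟩ = T.orderEmbOfFin rfl ⟨i - (n - T.card), by omega⟩ :=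
  dif_neg h

lemma Tcard_le (T : Finset (Fin n)) (hn : 0 < n) (h0 : (⟨0, hn⟩ : Fin n) ∉ T) :
    T.card ≤ n - 1 := by
  have hsub : T ⊆ Finset.univ.erase ⟨0, hn⟩ := fun x hx =>
    Finset.mem_erase.mpr ⟨fun hx0 => h0 (hx0 ▸ hx), Finset.mem_univ x⟩
  have := Finset.card_le_card hsub
  rwa [Finset.card_erase_of_mem (Finset.mem_univ _), Finset.card_univ, Fintype.card_fin] at this

lemma fin_pos_of_ne {hn : 0 < n} {x : Fin n} (hx : x ≠ ⟨0, hn⟩) : (⟨0, hn⟩ : Fin n) < x := by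
  rw [Fin.lt_def]
  exact Nat.pos_of_ne_zero (fun h => hx (Fin.ext h))

lemma gperm_zero (T : Finset (Fin n)) (hn : 0 < n) (h0 : (⟨0, hn⟩ : Fin n) ∉ T) :
    gperm T ⟨n - 1 - T.card, by omega⟩ = ⟨0, hn⟩ := by
  have ht := Tcard_le T hn h0
  rw [gperm_low T _ (by omega)]
  have e : (⟨n - 1 - T.card - (n - 1 - T.card), by omega⟩ : Fin (n - T.card)) =
      ⟨0, by omega⟩ := Fin.ext (by simp)
  rw [e, Finset.orderEmbOfFin_zero _ (by omega)]
  refine le_antisymm (Finset.min'_le _ _ (Finset.mem_compl.mpr h0)) ?_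
  exact Fin.le_def.mpr (Nat.zero_le _)

lemma gperm_mem_T_iff (T : Finset (Fin n)) (i : ℕ) (hi : i < n) :
    gperm T ⟨i, hi⟩ ∈ T ↔ n - T.card ≤ i := by
  by_cases h : i + T.card + 1 ≤ n
  · rw [gperm_low T i h]
    exact iff_of_false (fun hm => Finset.mem_compl.mp (Finset.orderEmbOfFin_mem _ _ _) hm)
      (by omega)
  · rw [gperm_high T i h hi]
    exact iff_of_true (Finset.orderEmbOfFin_mem _ _ _) (by omega)

lemma gperm_desc (T : Finset (Fin n)) (a b : ℕ) (hb : b < n) (hab : a + 1 = b)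
    (h : b + T.card + 1 ≤ n) :
    gperm T ⟨b, hb⟩ < gperm T ⟨a, by omega⟩ := by
  rw [gperm_low T b h, gperm_low T a (by omega)]
  exact (Tᶜ.orderEmbOfFin _).strictMono (by rw [Fin.mk_lt_mk]; omega)

lemma gperm_asc (T : Finset (Fin n)) (hn : 0 < n) (h0 : (⟨0, hn⟩ : Fin n) ∉ T)
    (a b : ℕ) (hb : b < n) (hab : a + 1 = b) (h : n - T.card ≤ b) :
    gperm T ⟨a, by omega⟩ < gperm T ⟨b, hb⟩ := by
  have ht := Tcard_le T hn h0
  by_cases ha : a + T.card + 1 ≤ n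
  · have ea : a = n - 1 - T.card := by omega
    rw [show (⟨a, by omega⟩ : Fin n) = ⟨n - 1 - T.card, by omega⟩ from Fin.ext ea,
      gperm_zero T hn h0]
    apply fin_pos_of_ne
    intro he
    exact h0 (he ▸ (gperm_mem_T_iff T b hb).mpr h)
  · rw [gperm_high T a ha (by omega), gperm_high T b (by omega) hb]
    exact (T.orderEmbOfFin rfl).strictMono (by rw [Fin.mk_lt_mk]; omega)

lemma gperm_nopeak (T : Finset (Fin n)) (hn : 0 < n) (h0 : (⟨0, hn⟩ : Fin n) ∉ T) :
    ∀ i, ¬ IsPeak (gperm T) i := by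
  rintro i ⟨⟨h1, h2⟩, hab, hcb⟩
  have ht := Tcard_le T hn h0
  by_cases hc : i - 1 + T.card + 1 ≤ n
  · exact absurd hab (asymm (gperm_desc T (i - 2) (i - 1) (by omega) (by omega) hc))
  · exact absurd hcb (asymm (gperm_asc T hn h0 (i - 1) i h2 (by omega) (by omega)))

end NoPeak

section Structure
variable {n : ℕ} (π : Equiv.Perm (Fin n)) (hπ : ∀ i, ¬ IsPeak π i)

lemma pi_ne {a b : ℕ} {ha : a < n} {hb : b < n} (hab : a ≠ b) :
    π ⟨a, ha⟩ ≠ π ⟨b, hb⟩ := fun h => hab (congrArg Fin.val (π.injective h))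

include hπ in
lemma step_desc (j : ℕ) (h1 : 1 ≤ j) (hj : j + 1 < n)
    (hd : π ⟨j + 1, hj⟩ < π ⟨j, by omega⟩) :
    π ⟨j, by omega⟩ < π ⟨j - 1, by omega⟩ := by
  have hp := hπ (j + 1)
  rw [IsPeak, not_exists] at hp
  have hA : ¬ (π ⟨j - 1, by omega⟩ < π ⟨j, by omega⟩) :=
    fun hA => hp ⟨by omega, by omega⟩ ⟨hA, hd⟩
  exact lt_of_le_of_ne (not_lt.mp hA) (pi_ne π (by omega))

include hπ in
lemma step_asc (j : ℕ) (hj : j + 2 < n)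
    (ha : π ⟨j, by omega⟩ < π ⟨j + 1, by omega⟩) :
    π ⟨j + 1, by omega⟩ < π ⟨j + 2, hj⟩ := by
  have hp := hπ (j + 2)
  rw [IsPeak, not_exists] at hp
  have hB : ¬ (π ⟨j + 2, hj⟩ < π ⟨j + 1, by omega⟩) :=
    fun hB => hp ⟨by omega, by omega⟩ ⟨ha, hB⟩
  exact lt_of_le_of_ne (not_lt.mp hB) (pi_ne π (by omega))

include hπ in
lemma descAll (hn : 0 < n) (m0 : ℕ) (hm0 : m0 < n) (hm : π ⟨m0, hm0⟩ = ⟨0, hn⟩) :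
    ∀ i (h : i + 1 ≤ m0), π ⟨i + 1, by omega⟩ < π ⟨i, by omega⟩ := by
  have key : ∀ g i (h : i + 1 + g = m0), π ⟨i + 1, by omega⟩ < π ⟨i, by omega⟩ := by
    intro g
    induction g with
    | zero =>
      intro i h
      rw [show (⟨i + 1, by omega⟩ : Fin n) = ⟨m0, hm0⟩ from Fin.ext (show i + 1 = m0 by omega), hm]
      exact fin_pos_of_ne fun he => pi_ne π (show i ≠ m0 by omega) (he.trans hm.symm)
    | succ g ih =>
      intro i h
      exact step_desc π hπ (i + 1) (by omega) (by omega) (ih (i + 1) (by omega))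
  intro i h
  exact key (m0 - 1 - i) i (by omega)

end Structure

section Structure2
variable {n : ℕ} (π : Equiv.Perm (Fin n)) (hπ : ∀ i, ¬ IsPeak π i)

include hπ in
lemma ascAll (hn : 0 < n) (m0 : ℕ) (hm0 : m0 < n) (hm : π ⟨m0, hm0⟩ = ⟨0, hn⟩) :
    ∀ i (h1 : m0 ≤ i) (h2 : i + 1 < n), π ⟨i, by omega⟩ < π ⟨i + 1, h2⟩ := by
  have key : ∀ g (hg : m0 + g + 1 < n), π ⟨m0 + g, by omega⟩ < π ⟨m0 + g + 1, hg⟩ := by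
    intro g
    induction g with
    | zero =>
      intro hg
      rw [show (⟨m0 + 0, by omega⟩ : Fin n) = ⟨m0, hm0⟩ from Fin.ext (show m0 + 0 = m0 by omega), hm]
      exact fin_pos_of_ne fun he => pi_ne π (show m0 + 0 + 1 ≠ m0 by omega) (he.trans hm.symm)
    | succ g ih =>
      intro hg
      exact step_asc π hπ (m0 + g) hg (ih (by omega))
  intro i h1 h2
  rw [show (⟨i, by omega⟩ : Fin n) = ⟨m0 + (i - m0), by omega⟩ from
      Fin.ext (show i = m0 + (i - m0) by omega),
    show (⟨i + 1, h2⟩ : Fin n) = ⟨m0 + (i - m0) + 1, by omega⟩ from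
      Fin.ext (show i + 1 = m0 + (i - m0) + 1 by omega)]
  exact key (i - m0) (by omega)

include hπ in
lemma desc_chain (hn : 0 < n) (m0 : ℕ) (hm0 : m0 < n) (hm : π ⟨m0, hm0⟩ = ⟨0, hn⟩)
    (p q : ℕ) (hq : q ≤ m0) (hpq : p < q) : π ⟨q, by omega⟩ < π ⟨p, by omega⟩ := by
  have hd := descAll π hπ hn m0 hm0 hm
  have key : ∀ d p (h : p + d + 1 ≤ m0), π ⟨p + d + 1, by omega⟩ < π ⟨p, by omega⟩ := by
    intro d
    induction d with
    | zero => intro p h; exact hd p (by omega)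
    | succ d ih =>
      intro p h
      exact (hd (p + d + 1) (by omega)).trans (ih p (by omega))
  rw [show (⟨q, by omega⟩ : Fin n) = ⟨p + (q - p - 1) + 1, by omega⟩ from
    Fin.ext (show q = p + (q - p - 1) + 1 by omega)]
  exact key (q - p - 1) p (by omega)

include hπ in
lemma asc_chain (hn : 0 < n) (m0 : ℕ) (hm0 : m0 < n) (hm : π ⟨m0, hm0⟩ = ⟨0, hn⟩)
    (p q : ℕ) (hp : m0 ≤ p) (hq : q < n) (hpq : p < q) :
    π ⟨p, by omega⟩ < π ⟨q, hq⟩ := by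
  have ha := ascAll π hπ hn m0 hm0 hm
  have key : ∀ d p (h1 : m0 ≤ p) (h : p + d + 1 < n), π ⟨p, by omega⟩ < π ⟨p + d + 1, h⟩ := by
    intro d
    induction d with
    | zero => intro p h1 h; exact ha p h1 h
    | succ d ih =>
      intro p h1 h
      exact (ih p h1 (by omega)).trans (ha (p + d + 1) (by omega) h)
  rw [show (⟨q, hq⟩ : Fin n) = ⟨p + (q - p - 1) + 1, by omega⟩ from
    Fin.ext (show q = p + (q - p - 1) + 1 by omega)]
  exact key (q - p - 1) p hp (by omega)

end Structure2

section Surj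
variable {n : ℕ}

def Tof (hn : 0 < n) (π : Equiv.Perm (Fin n)) : Finset (Fin n) :=
  Finset.univ.filter fun v => π.symm ⟨0, hn⟩ < π.symm v

lemma Tof_notMem_zero (hn : 0 < n) (π : Equiv.Perm (Fin n)) :
    (⟨0, hn⟩ : Fin n) ∉ Tof hn π := by simp [Tof]

lemma mem_Tof (hn : 0 < n) (π : Equiv.Perm (Fin n)) (v : Fin n) :
    v ∈ Tof hn π ↔ π.symm ⟨0, hn⟩ < π.symm v := by simp [Tof]

lemma Tof_card (hn : 0 < n) (π : Equiv.Perm (Fin n)) :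
    (Tof hn π).card = n - 1 - ((π.symm ⟨0, hn⟩ : Fin n) : ℕ) := by
  have himg : Tof hn π = Finset.image π (Finset.Ioi (π.symm ⟨0, hn⟩)) := by
    ext v
    simp only [Tof, Finset.mem_filter, Finset.mem_univ, true_and, Finset.mem_image,
      Finset.mem_Ioi]
    constructor
    · intro h; exact ⟨π.symm v, h, by simp⟩
    · rintro ⟨i, hi, rfl⟩; simpa using hi
  rw [himg, Finset.card_image_of_injective _ π.injective, Fin.card_Ioi]

set_option maxHeartbeats 2000000 in
lemma gperm_Tof (hn : 0 < n) (π : Equiv.Perm (Fin n)) (hπ : ∀ i, ¬ IsPeak π i) :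
    gperm (Tof hn π) = π := by
  obtain ⟨m0, hm0, hsymm0⟩ : ∃ (m0 : ℕ) (hm0 : m0 < n), π.symm ⟨0, hn⟩ = ⟨m0, hm0⟩ :=
    ⟨((π.symm ⟨0, hn⟩ : Fin n) : ℕ), (π.symm ⟨0, hn⟩).isLt, Fin.ext rfl⟩
  have hm : π ⟨m0, hm0⟩ = ⟨0, hn⟩ := by rw [← hsymm0, Equiv.apply_symm_apply]
  have htc : (Tof hn π).card = n - 1 - m0 := by rw [Tof_card hn π, hsymm0]
  apply Equiv.ext
  intro i
  have hiLt := i.isLt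
  by_cases hi : (i : ℕ) + (Tof hn π).card + 1 ≤ n
  · have hile : (i : ℕ) ≤ m0 := by omega
    have hcT : (Tof hn π)ᶜ.card = n - (Tof hn π).card := by simp [Finset.card_compl]
    have hf := Finset.orderEmbOfFin_unique (k := n - (Tof hn π).card) hcT
      (f := fun k : Fin (n - (Tof hn π).card) => π ⟨m0 - (k : ℕ), by omega⟩)
      (fun k => by
        rw [Finset.mem_compl, mem_Tof, Equiv.symm_apply_apply, hsymm0, Fin.mk_lt_mk]
        omega)
      (fun a b hab => by
        have hbv : (b : ℕ) < n - (Tof hn π).card := b.isLt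
        exact desc_chain π hπ hn m0 hm0 hm (m0 - (b : ℕ)) (m0 - (a : ℕ))
          (by omega) (by rw [Fin.lt_def] at hab; omega))
    have h1 : gperm (Tof hn π) i =
        (Tof hn π)ᶜ.orderEmbOfFin (k := n - (Tof hn π).card) hcT
          ⟨n - 1 - (Tof hn π).card - (i : ℕ), by omega⟩ := gperm_low (Tof hn π) (i : ℕ) hi
    rw [h1, ← hf]
    exact congrArg π (Fin.ext (show m0 - (n - 1 - (Tof hn π).card - (i : ℕ)) = (i : ℕ) by omega))
  · have h1 : gperm (Tof hn π) i =
        (Tof hn π).orderEmbOfFin rfl ⟨(i : ℕ) - (n - (Tof hn π).card), by omega⟩ :=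
      gperm_high (Tof hn π) (i : ℕ) hi i.isLt
    have hf := Finset.orderEmbOfFin_unique (k := (Tof hn π).card) rfl
      (f := fun k : Fin (Tof hn π).card => π ⟨m0 + 1 + (k : ℕ), by have := k.isLt; omega⟩)
      (fun k => by
        rw [mem_Tof, Equiv.symm_apply_apply, hsymm0, Fin.mk_lt_mk]
        have := k.isLt
        omega)
      (fun a b hab => by
        have hbv : (b : ℕ) < (Tof hn π).card := b.isLt
        exact asc_chain π hπ hn m0 hm0 hm (m0 + 1 + (a : ℕ)) (m0 + 1 + (b : ℕ))
          (by omega) (by omega) (by rw [Fin.lt_def] at hab; omega))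
    rw [h1, ← hf]
    exact congrArg π (Fin.ext
      (show m0 + 1 + ((i : ℕ) - (n - (Tof hn π).card)) = (i : ℕ) by omega))

end Surj


section Count
variable {n : ℕ}

lemma mem_peak_empty (π : Equiv.Perm (Fin n)) :
    π ∈ peakSetEq n (∅ : Finset ℕ) ↔ ∀ i, ¬ IsPeak π i := by
  simp [peakSetEq]

lemma mem_iff_symm (T : Finset (Fin n)) (hn : 0 < n) (h0 : (⟨0, hn⟩ : Fin n) ∉ T) (v : Fin n) :
    v ∈ T ↔ (gperm T).symm ⟨0, hn⟩ < (gperm T).symm v := by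
  have ht := Tcard_le T hn h0
  have hz : (gperm T).symm ⟨0, hn⟩ = ⟨n - 1 - T.card, by omega⟩ :=
    (Equiv.symm_apply_eq _).mpr (gperm_zero T hn h0).symm
  obtain ⟨jv, hjv, hj⟩ : ∃ (jv : ℕ) (h : jv < n), (gperm T).symm v = ⟨jv, h⟩ :=
    ⟨_, ((gperm T).symm v).isLt, Fin.ext rfl⟩
  have hv : gperm T ⟨jv, hjv⟩ = v := by rw [← hj, Equiv.apply_symm_apply]
  rw [hz, hj, Fin.mk_lt_mk, ← hv, gperm_mem_T_iff]
  omega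

lemma bijOn_gperm (hn : 0 < n) :
    Set.BijOn gperm {T : Finset (Fin n) | (⟨0, hn⟩ : Fin n) ∉ T} (peakSetEq n ∅) := by
  refine ⟨fun T hT => (mem_peak_empty _).mpr (gperm_nopeak T hn hT), ?_, ?_⟩
  · intro T hT T' hT' he
    ext v
    rw [mem_iff_symm T hn hT v, mem_iff_symm T' hn hT' v, he]
  · intro π hp
    exact ⟨Tof hn π, Tof_notMem_zero hn π, gperm_Tof hn π ((mem_peak_empty π).mp hp)⟩

lemma Dset_ncard (hn : 0 < n) :
    ({T : Finset (Fin n) | (⟨0, hn⟩ : Fin n) ∉ T} : Set (Finset (Fin n))).ncard = 2 ^ (n - 1) := by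
  have he : {T : Finset (Fin n) | (⟨0, hn⟩ : Fin n) ∉ T} =
      ↑((Finset.univ.erase (⟨0, hn⟩ : Fin n)).powerset) := by
    ext T
    rw [Set.mem_setOf_eq, Finset.mem_coe, Finset.mem_powerset, Finset.subset_erase]
    simp
  rw [he, Set.ncard_coe_finset, Finset.card_powerset,
    Finset.card_erase_of_mem (Finset.mem_univ _), Finset.card_univ, Fintype.card_fin]

lemma peak_ncard (hn : 0 < n) : (peakSetEq n (∅ : Finset ℕ)).ncard = 2 ^ (n - 1) := by
  rw [← (bijOn_gperm hn).image_eq, Set.ncard_image_of_injOn (bijOn_gperm hn).injOn, Dset_ncard hn]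

lemma gperm_empty_desc (hn : 2 ≤ n) : EndsDescent n (gperm (∅ : Finset (Fin n))) := by
  refine ⟨hn, ?_⟩
  exact gperm_desc (∅ : Finset (Fin n)) (n - 2) (n - 1) (by omega) (by omega)
    (by rw [Finset.card_empty]; omega)

lemma underline_eq (hn : 2 ≤ n) :
    underlineP n ∅ = {gperm (∅ : Finset (Fin n))} := by
  have hn0 : 0 < n := by omega
  ext π
  simp only [underlineP, Set.mem_setOf_eq, Set.mem_singleton_iff]
  constructor
  · rintro ⟨hp, h2, hdlt⟩
    have hnp := (mem_peak_empty π).mp hp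
    obtain ⟨m0, hm0, hsymm0⟩ : ∃ (m0 : ℕ) (h : m0 < n), π.symm ⟨0, hn0⟩ = ⟨m0, h⟩ :=
      ⟨_, (π.symm ⟨0, hn0⟩).isLt, Fin.ext rfl⟩
    have hm : π ⟨m0, hm0⟩ = ⟨0, hn0⟩ := by rw [← hsymm0, Equiv.apply_symm_apply]
    have hm0top : m0 = n - 1 := by
      by_contra hne
      have ha := ascAll π hnp hn0 m0 hm0 hm (n - 2) (by omega) (by omega)
      rw [show (⟨n - 2 + 1, by omega⟩ : Fin n) = ⟨n - 1, by omega⟩ from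
        Fin.ext (show n - 2 + 1 = n - 1 by omega)] at ha
      exact absurd hdlt (asymm ha)
    have hT : Tof hn0 π = ∅ := by
      rw [Finset.eq_empty_iff_forall_notMem]
      intro v hv
      rw [mem_Tof, hsymm0] at hv
      obtain ⟨jv, hjv, hj⟩ : ∃ (jv : ℕ) (h : jv < n), π.symm v = ⟨jv, h⟩ :=
        ⟨_, (π.symm v).isLt, Fin.ext rfl⟩
      rw [hj, Fin.mk_lt_mk] at hv
      omega
    have hg := gperm_Tof hn0 π hnp
    rw [hT] at hg
    exact hg.symm
  · rintro rfl
    exact ⟨(mem_peak_empty _).mpr (gperm_nopeak ∅ hn0 (Finset.notMem_empty _)),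
      gperm_empty_desc hn⟩

end Count

theorem stmt2 (n : ℕ) (hn : 2 ≤ n) :
    (underlineP n ∅).ncard = 1 ∧ (overlineP n ∅).ncard = 2 ^ (n - 1) - 1 := by
  have hn0 : 0 < n := by omega
  have hU : peakSetEq n (∅ : Finset ℕ) = overlineP n ∅ ∪ underlineP n ∅ := by
    ext π
    constructor
    · intro hp
      rcases lt_trichotomy (π ⟨n - 2, by omega⟩) (π ⟨n - 1, by omega⟩) with h | h | h
      · exact Or.inl ⟨hp, hn, h⟩
      · exact absurd h (pi_ne π (by omega))
      · exact Or.inr ⟨hp, hn, h⟩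
    · rintro (⟨hp, _⟩ | ⟨hp, _⟩) <;> exact hp
  have hdisj : Disjoint (overlineP n ∅) (underlineP n ∅) := by
    rw [Set.disjoint_left]
    rintro π ⟨_, _, ha⟩ ⟨_, _, hd⟩
    exact absurd ha (asymm hd)
  have h1 : (underlineP n ∅).ncard = 1 := by
    rw [underline_eq hn]
    exact Set.ncard_singleton _
  refine ⟨h1, ?_⟩
  have hpc : (peakSetEq n (∅ : Finset ℕ)).ncard = 2 ^ (n - 1) := peak_ncard hn0
  have hsum : (peakSetEq n (∅ : Finset ℕ)).ncard =
      (overlineP n ∅).ncard + (underlineP n ∅).ncard := by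
    rw [hU]
    exact Set.ncard_union_eq hdisj (Set.toFinite _) (Set.toFinite _)
  have hge : 1 ≤ 2 ^ (n - 1) := Nat.one_le_two_pow
  omega
end

section
/- Let S ⊆ {1,…,n−1} be a nonempty admissible set, let m = max(S), and set S₁ = S∖{m} and S₂ = S₁ ∪ {m−1}. Then |overline{P(S;n)}| = C(n, m−1)·(2^{n−m} − 1)·|P(S₁;m−1)| − |overline{P(S₁;n)}| − |overline{P(S₂;n)}|, where C(a,b) denotes the binomial coefficient. -/
open Equiv

open Equiv Finset

namespace Stmt3Aux

/-- Splice a pattern on the first `p` positions (values in `V`) with a pattern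
on the rest (values in `Vᶜ`). -/
def splice {n p : ℕ} (V : Finset (Fin n)) (hV : V.card = p)
    (σ : Equiv.Perm (Fin p)) (ρ : Equiv.Perm (Fin (n - p))) : Fin n → Fin n :=
  fun i =>
    if h : (i : ℕ) < p then V.orderEmbOfFin hV (σ ⟨i, h⟩)
    else Vᶜ.orderEmbOfFin (by simp [Finset.card_compl, hV]) (ρ ⟨(i : ℕ) - p, by have := i.isLt; omega⟩)

lemma splice_lt {n p : ℕ} (V : Finset (Fin n)) (hV : V.card = p)
    (σ : Equiv.Perm (Fin p)) (ρ : Equiv.Perm (Fin (n - p))) (i : Fin n) (h : (i : ℕ) < p) :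
    splice V hV σ ρ i = V.orderEmbOfFin hV (σ ⟨i, h⟩) := dif_pos h

lemma splice_ge {n p : ℕ} (V : Finset (Fin n)) (hV : V.card = p)
    (σ : Equiv.Perm (Fin p)) (ρ : Equiv.Perm (Fin (n - p))) (i : Fin n) (h : ¬ (i : ℕ) < p) :
    splice V hV σ ρ i = Vᶜ.orderEmbOfFin (by simp [Finset.card_compl, hV])
      (ρ ⟨(i : ℕ) - p, by have := i.isLt; omega⟩) := dif_neg h

lemma splice_injective {n p : ℕ} (V : Finset (Fin n)) (hV : V.card = p)
    (σ : Equiv.Perm (Fin p)) (ρ : Equiv.Perm (Fin (n - p))) :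
    Function.Injective (splice V hV σ ρ) := by
  intro i j hij
  unfold splice at hij
  split_ifs at hij with h1 h2 h2
  · have := (V.orderEmbOfFin hV).injective hij
    have := σ.injective this
    have : (⟨(i:ℕ), h1⟩ : Fin p).val = (⟨(j:ℕ), h2⟩ : Fin p).val := by rw [this]
    exact Fin.ext this
  · exfalso
    have hm1 : V.orderEmbOfFin hV (σ ⟨i, h1⟩) ∈ V := Finset.orderEmbOfFin_mem _ _ _
    rw [hij] at hm1
    have hm2 := Finset.orderEmbOfFin_mem Vᶜ (by simp [Finset.card_compl, hV])
      (ρ ⟨(j:ℕ) - p, by have := j.isLt; omega⟩)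
    rw [Finset.mem_compl] at hm2
    exact hm2 hm1
  · exfalso
    have hm1 : V.orderEmbOfFin hV (σ ⟨j, h2⟩) ∈ V := Finset.orderEmbOfFin_mem _ _ _
    rw [← hij] at hm1
    have hm2 := Finset.orderEmbOfFin_mem Vᶜ (by simp [Finset.card_compl, hV])
      (ρ ⟨(i:ℕ) - p, by have := i.isLt; omega⟩)
    rw [Finset.mem_compl] at hm2
    exact hm2 hm1
  · have := (Vᶜ.orderEmbOfFin (by simp [Finset.card_compl, hV] : Vᶜ.card = n - p)).injective hij
    have := ρ.injective this
    have h3 : (i:ℕ) - p = (j:ℕ) - p := congrArg Fin.val this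
    exact Fin.ext (by omega)

/-- The spliced permutation. -/
noncomputable def spliceEquiv {n p : ℕ} (V : Finset (Fin n)) (hV : V.card = p)
    (σ : Equiv.Perm (Fin p)) (ρ : Equiv.Perm (Fin (n - p))) : Equiv.Perm (Fin n) :=
  Equiv.ofBijective _ (Finite.injective_iff_bijective.mp (splice_injective V hV σ ρ))

lemma spliceEquiv_apply {n p : ℕ} (V : Finset (Fin n)) (hV : V.card = p)
    (σ : Equiv.Perm (Fin p)) (ρ : Equiv.Perm (Fin (n - p))) (i : Fin n) :
    spliceEquiv V hV σ ρ i = splice V hV σ ρ i := rfl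

/-- Peak of the first `p` entries, viewed standalone. -/
def PPeak {n : ℕ} (p : ℕ) (π : Equiv.Perm (Fin n)) (i : ℕ) : Prop :=
  ∃ h : 1 < i ∧ i < p ∧ p ≤ n,
    π ⟨i - 2, by omega⟩ < π ⟨i - 1, by omega⟩ ∧ π ⟨i, by omega⟩ < π ⟨i - 1, by omega⟩

/-- The master counting set. -/
def setX (n p : ℕ) (S₁ : Finset ℕ) : Set (Equiv.Perm (Fin n)) :=
  {π | (∀ i : ℕ, PPeak p π i ↔ i ∈ S₁) ∧ (∀ i : ℕ, p + 1 < i → ¬ IsPeak π i) ∧ EndsAscent n π}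

/-- Valley permutations ending with an ascent. -/
def ValleyAsc (l : ℕ) : Set (Equiv.Perm (Fin l)) :=
  {ρ | (∀ i : ℕ, ¬ IsPeak ρ i) ∧ EndsAscent l ρ}

section Transfer

variable {n p : ℕ} (V : Finset (Fin n)) (hV : V.card = p)
  (σ : Equiv.Perm (Fin p)) (ρ : Equiv.Perm (Fin (n - p)))

lemma splice_lt_iff_lt (a b : ℕ) (ha : a < p) (hb : b < p) (ha' : a < n) (hb' : b < n) :
    spliceEquiv V hV σ ρ ⟨a, ha'⟩ < spliceEquiv V hV σ ρ ⟨b, hb'⟩ ↔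
      σ ⟨a, ha⟩ < σ ⟨b, hb⟩ := by
  rw [spliceEquiv_apply, spliceEquiv_apply, splice_lt V hV σ ρ _ ha, splice_lt V hV σ ρ _ hb]
  exact (V.orderEmbOfFin hV).lt_iff_lt

lemma splice_ge_lt_iff (a b : ℕ) (ha : p ≤ a) (hb : p ≤ b) (ha' : a < n) (hb' : b < n) :
    spliceEquiv V hV σ ρ ⟨a, ha'⟩ < spliceEquiv V hV σ ρ ⟨b, hb'⟩ ↔
      ρ ⟨a - p, by omega⟩ < ρ ⟨b - p, by omega⟩ := by
  rw [spliceEquiv_apply, spliceEquiv_apply, splice_ge V hV σ ρ _ (by simp; omega),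
    splice_ge V hV σ ρ _ (by simp; omega)]
  exact (Vᶜ.orderEmbOfFin _).lt_iff_lt

lemma transfer_PPeak (i : ℕ) : PPeak p (spliceEquiv V hV σ ρ) i ↔ IsPeak σ i := by
  have hpn : p ≤ n := by rw [← hV]; simpa using V.card_le_univ
  constructor
  · rintro ⟨⟨h1, h2, h3⟩, hab, hcb⟩
    refine ⟨⟨h1, h2⟩, ?_, ?_⟩
    · exact (splice_lt_iff_lt V hV σ ρ (i-2) (i-1) (by omega) (by omega) (by omega) (by omega)).mp hab
    · exact (splice_lt_iff_lt V hV σ ρ i (i-1) (by omega) (by omega) (by omega) (by omega)).mp hcb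
  · rintro ⟨⟨h1, h2⟩, hab, hcb⟩
    refine ⟨⟨h1, h2, hpn⟩, ?_, ?_⟩
    · exact (splice_lt_iff_lt V hV σ ρ (i-2) (i-1) (by omega) (by omega) (by omega) (by omega)).mpr hab
    · exact (splice_lt_iff_lt V hV σ ρ i (i-1) (by omega) (by omega) (by omega) (by omega)).mpr hcb

lemma transfer_suffix_peak (i : ℕ) (hi : p + 1 < i) :
    IsPeak (spliceEquiv V hV σ ρ) i ↔ IsPeak ρ (i - p) := by
  constructor
  · rintro ⟨⟨h1, h2⟩, hab, hcb⟩
    refine ⟨⟨by omega, by omega⟩, ?_, ?_⟩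
    · have := (splice_ge_lt_iff V hV σ ρ (i-2) (i-1) (by omega) (by omega) (by omega) (by omega)).mp hab
      convert this using 3 <;> omega
    · have := (splice_ge_lt_iff V hV σ ρ i (i-1) (by omega) (by omega) (by omega) (by omega)).mp hcb
      convert this using 3 <;> omega
  · rintro ⟨⟨h1, h2⟩, hab, hcb⟩
    refine ⟨⟨by omega, by omega⟩, ?_, ?_⟩
    · refine (splice_ge_lt_iff V hV σ ρ (i-2) (i-1) (by omega) (by omega) (by omega) (by omega)).mpr ?_
      convert hab using 3 <;> omega
    · refine (splice_ge_lt_iff V hV σ ρ i (i-1) (by omega) (by omega) (by omega) (by omega)).mpr ?_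
      convert hcb using 3 <;> omega

lemma transfer_ends (hp2 : p + 2 ≤ n) :
    EndsAscent n (spliceEquiv V hV σ ρ) ↔ EndsAscent (n - p) ρ := by
  constructor
  · rintro ⟨h2, hlt⟩
    refine ⟨by omega, ?_⟩
    have := (splice_ge_lt_iff V hV σ ρ (n-2) (n-1) (by omega) (by omega) (by omega) (by omega)).mp hlt
    convert this using 3 <;> omega
  · rintro ⟨h2, hlt⟩
    refine ⟨by omega, ?_⟩
    refine (splice_ge_lt_iff V hV σ ρ (n-2) (n-1) (by omega) (by omega) (by omega) (by omega)).mpr ?_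
    convert hlt using 3 <;> omega

lemma transfer_mem (hp2 : p + 2 ≤ n) (S₁ : Finset ℕ) :
    spliceEquiv V hV σ ρ ∈ setX n p S₁ ↔ σ ∈ peakSetEq p S₁ ∧ ρ ∈ ValleyAsc (n - p) := by
  constructor
  · rintro ⟨hpre, hsuf, hend⟩
    refine ⟨fun i => (transfer_PPeak V hV σ ρ i).symm.trans (hpre i), ?_,
      (transfer_ends V hV σ ρ hp2).mp hend⟩
    intro j hj
    rcases hj with ⟨⟨hj1, hj2⟩, h⟩
    have : IsPeak (spliceEquiv V hV σ ρ) (j + p) := by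
      rw [transfer_suffix_peak V hV σ ρ (j + p) (by omega)]
      have e : j + p - p = j := by omega
      rw [e]; exact ⟨⟨hj1, hj2⟩, h⟩
    exact hsuf (j + p) (by omega) this
  · rintro ⟨hσ, hρ, hend⟩
    refine ⟨fun i => (transfer_PPeak V hV σ ρ i).trans (hσ i), ?_,
      (transfer_ends V hV σ ρ hp2).mpr hend⟩
    intro i hi hpk
    exact hρ (i - p) ((transfer_suffix_peak V hV σ ρ i hi).mp hpk)

lemma mem_splice_image {n p : ℕ} (V : Finset (Fin n)) (hV : V.card = p)
    (σ : Equiv.Perm (Fin p)) (ρ : Equiv.Perm (Fin (n - p))) (v : Fin n) :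
    v ∈ V ↔ ∃ i : Fin n, (i : ℕ) < p ∧ spliceEquiv V hV σ ρ i = v := by
  have hpn : p ≤ n := by rw [← hV]; simpa using V.card_le_univ
  constructor
  · intro hv
    obtain ⟨j, hj⟩ : ∃ j, V.orderEmbOfFin hV j = v := by
      have : v ∈ Set.range (V.orderEmbOfFin hV) := by rw [Finset.range_orderEmbOfFin]; exact hv
      exact this
    have hjlt : ((σ.symm j : Fin p) : ℕ) < p := (σ.symm j).isLt
    refine ⟨⟨(σ.symm j : Fin p), by omega⟩, hjlt, ?_⟩
    rw [spliceEquiv_apply, splice_lt V hV σ ρ _ hjlt]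
    have : σ ⟨((σ.symm j : Fin p) : ℕ), hjlt⟩ = j := by
      have : (⟨((σ.symm j : Fin p) : ℕ), hjlt⟩ : Fin p) = σ.symm j := rfl
      rw [this, Equiv.apply_symm_apply]
    rw [this]; exact hj
  · rintro ⟨i, hi, rfl⟩
    rw [spliceEquiv_apply, splice_lt V hV σ ρ _ hi]
    exact Finset.orderEmbOfFin_mem _ _ _

/-- The splice map on triples. -/
noncomputable def spliceF (n p : ℕ) :
    {V : Finset (Fin n) // V.card = p} × Equiv.Perm (Fin p) × Equiv.Perm (Fin (n - p)) →
      Equiv.Perm (Fin n) :=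
  fun t => spliceEquiv t.1.1 t.1.2 t.2.1 t.2.2

lemma spliceF_injective (n p : ℕ) : Function.Injective (spliceF n p) := by
  rintro ⟨⟨V, hV⟩, σ, ρ⟩ ⟨⟨V', hV'⟩, σ', ρ'⟩ h
  simp only [spliceF] at h
  have hpn : p ≤ n := by rw [← hV]; simpa using V.card_le_univ
  have hVV : V = V' := by
    ext v
    rw [mem_splice_image V hV σ ρ v, mem_splice_image V' hV' σ' ρ' v, h]
  subst hVV
  have hσ : σ = σ' := by
    apply Equiv.ext
    intro i
    have hi : ((⟨(i : ℕ), by have := i.isLt; omega⟩ : Fin n) : ℕ) < p := i.isLt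
    have h2 : spliceEquiv V hV σ ρ ⟨(i : ℕ), by have := i.isLt; omega⟩ =
        spliceEquiv V hV' σ' ρ' ⟨(i : ℕ), by have := i.isLt; omega⟩ := by rw [h]
    rw [spliceEquiv_apply, spliceEquiv_apply, splice_lt V hV σ ρ _ hi,
      splice_lt V hV' σ' ρ' _ hi] at h2
    have h3 := (V.orderEmbOfFin hV).injective h2
    have h4 : (σ ⟨(i : ℕ), hi⟩ : ℕ) = (σ' ⟨(i : ℕ), hi⟩ : ℕ) := congrArg Fin.val h3
    have h5 : σ ⟨(i : ℕ), hi⟩ = σ' ⟨(i : ℕ), hi⟩ := Fin.ext h4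
    have e : (⟨(i : ℕ), hi⟩ : Fin p) = i := Fin.ext rfl
    rwa [e] at h5
  subst hσ
  have hρ : ρ = ρ' := by
    apply Equiv.ext
    intro j
    have hjn : p + (j : ℕ) < n := by have := j.isLt; omega
    have hge : ¬ ((⟨p + (j : ℕ), hjn⟩ : Fin n) : ℕ) < p := by simp
    have h2 : spliceEquiv V hV σ ρ ⟨p + (j : ℕ), hjn⟩ =
        spliceEquiv V hV' σ ρ' ⟨p + (j : ℕ), hjn⟩ := by rw [h]
    rw [spliceEquiv_apply, spliceEquiv_apply, splice_ge V hV σ ρ _ hge,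
      splice_ge V hV' σ ρ' _ hge] at h2
    have h3 := (Vᶜ.orderEmbOfFin (by simp [Finset.card_compl, hV] : Vᶜ.card = n - p)).injective h2
    have h4 : ρ ⟨p + (j : ℕ) - p, by have := j.isLt; omega⟩ =
        ρ' ⟨p + (j : ℕ) - p, by have := j.isLt; omega⟩ := h3
    have e : (⟨p + (j : ℕ) - p, by have := j.isLt; omega⟩ : Fin (n - p)) = j :=
      Fin.ext (by simp)
    rwa [e] at h4
  rw [hρ]

lemma spliceF_bijective (n p : ℕ) (hpn : p ≤ n) : Function.Bijective (spliceF n p) := by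
  rw [Fintype.bijective_iff_injective_and_card]
  refine ⟨spliceF_injective n p, ?_⟩
  simp only [Fintype.card_prod, Fintype.card_finset_len, Fintype.card_perm, Fintype.card_fin]
  rw [← mul_assoc]
  exact Nat.choose_mul_factorial_mul_factorial hpn

end Transfer

lemma ncard_prod' {α β : Type*} (s : Set α) (t : Set β) :
    (s ×ˢ t).ncard = s.ncard * t.ncard := by
  rw [← Nat.card_coe_set_eq, ← Nat.card_coe_set_eq, ← Nat.card_coe_set_eq,
    ← Nat.card_prod]
  exact Nat.card_congr (Equiv.Set.prod s t)

lemma ncard_setX (n p : ℕ) (hp2 : p + 2 ≤ n) (S₁ : Finset ℕ) :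
    (setX n p S₁).ncard = n.choose p * (peakSetEq p S₁).ncard * (ValleyAsc (n - p)).ncard := by
  have hb := spliceF_bijective n p (by omega)
  have himg : setX n p S₁ =
      spliceF n p '' (Set.univ ×ˢ (peakSetEq p S₁ ×ˢ ValleyAsc (n - p))) := by
    ext π
    constructor
    · intro hπ
      obtain ⟨t, rfl⟩ := hb.2 π
      obtain ⟨⟨V, hV⟩, σ, ρ⟩ := t
      have h := (transfer_mem V hV σ ρ hp2 S₁).mp hπ
      exact ⟨(⟨V, hV⟩, σ, ρ), ⟨Set.mem_univ _, h.1, h.2⟩, rfl⟩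
    · rintro ⟨⟨⟨V, hV⟩, σ, ρ⟩, ⟨-, hσ, hρ⟩, rfl⟩
      exact (transfer_mem V hV σ ρ hp2 S₁).mpr ⟨hσ, hρ⟩
  rw [himg, Set.ncard_image_of_injective _ hb.1, ncard_prod', ncard_prod', Set.ncard_univ,
    Nat.card_eq_fintype_card, Fintype.card_finset_len, Fintype.card_fin, mul_assoc]

section Valley

/-- The valley permutation determined by the set `L` of values placed, in decreasing
order, before the minimum. -/
def vsplice (l : ℕ) (L : Finset (Fin l)) : Fin l → Fin l :=
  fun i =>
    if h : (i : ℕ) < L.card then L.orderEmbOfFin rfl ⟨L.card - 1 - (i : ℕ), by omega⟩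
    else Lᶜ.orderEmbOfFin (by simp [Finset.card_compl])
      (⟨(i : ℕ) - L.card, by have := i.isLt; omega⟩ : Fin (l - L.card))

lemma vsplice_injective (l : ℕ) (L : Finset (Fin l)) : Function.Injective (vsplice l L) := by
  intro i j hij
  unfold vsplice at hij
  split_ifs at hij with h1 h2 h2
  · have := (L.orderEmbOfFin rfl).injective hij
    have h3 : L.card - 1 - (i : ℕ) = L.card - 1 - (j : ℕ) := congrArg Fin.val this
    exact Fin.ext (by omega)
  · exfalso
    have hm1 : L.orderEmbOfFin rfl ⟨L.card - 1 - (i : ℕ), by omega⟩ ∈ L :=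
      Finset.orderEmbOfFin_mem _ _ _
    rw [hij] at hm1
    have hm2 := Finset.orderEmbOfFin_mem Lᶜ (by simp [Finset.card_compl] : Lᶜ.card = l - L.card)
      ⟨(j : ℕ) - L.card, by have := j.isLt; omega⟩
    rw [Finset.mem_compl] at hm2
    exact hm2 hm1
  · exfalso
    have hm1 : L.orderEmbOfFin rfl ⟨L.card - 1 - (j : ℕ), by omega⟩ ∈ L :=
      Finset.orderEmbOfFin_mem _ _ _
    rw [← hij] at hm1
    have hm2 := Finset.orderEmbOfFin_mem Lᶜ (by simp [Finset.card_compl] : Lᶜ.card = l - L.card)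
      ⟨(i : ℕ) - L.card, by have := i.isLt; omega⟩
    rw [Finset.mem_compl] at hm2
    exact hm2 hm1
  · have := (Lᶜ.orderEmbOfFin (by simp [Finset.card_compl] : Lᶜ.card = l - L.card)).injective hij
    have h3 : (i : ℕ) - L.card = (j : ℕ) - L.card := congrArg Fin.val this
    exact Fin.ext (by omega)

/-- The valley permutation as a permutation. -/
noncomputable def vspliceEquiv (l : ℕ) (L : Finset (Fin l)) : Equiv.Perm (Fin l) :=
  Equiv.ofBijective _ (Finite.injective_iff_bijective.mp (vsplice_injective l L))

lemma vspliceEquiv_apply (l : ℕ) (L : Finset (Fin l)) (i : Fin l) :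
    vspliceEquiv l L i = vsplice l L i := rfl

lemma vsplice_desc (l : ℕ) (L : Finset (Fin l)) (i j : Fin l) (hij : (i : ℕ) < (j : ℕ))
    (hj : (j : ℕ) < L.card) : vsplice l L j < vsplice l L i := by
  unfold vsplice
  rw [dif_pos hj, dif_pos (show (i : ℕ) < L.card by omega)]
  exact (L.orderEmbOfFin rfl).strictMono (Fin.mk_lt_mk.mpr (by omega))

lemma vsplice_asc (l : ℕ) (L : Finset (Fin l)) (i j : Fin l) (hij : (i : ℕ) < (j : ℕ))
    (hi : L.card ≤ (i : ℕ)) : vsplice l L i < vsplice l L j := by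
  unfold vsplice
  rw [dif_neg (show ¬ (i : ℕ) < L.card by omega), dif_neg (show ¬ (j : ℕ) < L.card by omega)]
  exact (Lᶜ.orderEmbOfFin _).strictMono (Fin.mk_lt_mk.mpr (by omega))

lemma vsplice_card_val (l : ℕ) [NeZero l] (L : Finset (Fin l)) (h0 : (0 : Fin l) ∉ L)
    (hc : L.card < l) : vsplice l L ⟨L.card, hc⟩ = 0 := by
  unfold vsplice
  rw [dif_neg (by simp)]
  have hpos : 0 < l - L.card := by omega
  have hz := Finset.orderEmbOfFin_zero
    (by simp [Finset.card_compl] : Lᶜ.card = l - L.card) hpos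
  have e : (⟨((⟨L.card, hc⟩ : Fin l) : ℕ) - L.card, by have : ((⟨L.card, hc⟩ : Fin l) : ℕ) = L.card := rfl; omega⟩ : Fin (l - L.card)) =
      ⟨0, hpos⟩ := Fin.ext (Nat.sub_self _)
  rw [e, hz]
  refine le_antisymm ?_ (Fin.zero_le _)
  exact Finset.min'_le _ _ (Finset.mem_compl.mpr h0)

lemma mem_vsplice_iff (l : ℕ) (L : Finset (Fin l)) (x : Fin l) :
    x ∈ L ↔ ∃ i : Fin l, (i : ℕ) < L.card ∧ vsplice l L i = x := by
  constructor
  · intro hx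
    obtain ⟨j, hj⟩ : ∃ j, L.orderEmbOfFin rfl j = x := by
      have : x ∈ Set.range (L.orderEmbOfFin rfl) := by rw [Finset.range_orderEmbOfFin]; exact hx
      exact this
    have hjc := j.isLt
    have hcl : L.card ≤ l := by simpa using L.card_le_univ
    have hilt : L.card - 1 - (j : ℕ) < L.card := by omega
    refine ⟨⟨L.card - 1 - (j : ℕ), by omega⟩, hilt, ?_⟩
    unfold vsplice
    rw [dif_pos hilt]
    have e : (⟨L.card - 1 - (L.card - 1 - (j : ℕ)), by omega⟩ : Fin L.card) = j :=
      Fin.ext (show L.card - 1 - (L.card - 1 - (j : ℕ)) = (j : ℕ) by omega)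
    rw [e]; exact hj
  · rintro ⟨i, hi, rfl⟩
    unfold vsplice
    rw [dif_pos hi]
    exact Finset.orderEmbOfFin_mem _ _ _

lemma vsplice_inj_on (l : ℕ) [NeZero l] (L L' : Finset (Fin l)) (h0 : (0 : Fin l) ∉ L)
    (h0' : (0 : Fin l) ∉ L') (h : vspliceEquiv l L = vspliceEquiv l L') : L = L' := by
  have hcl : L.card ≤ l := by simpa using L.card_le_univ
  have hcl' : L'.card ≤ l := by simpa using L'.card_le_univ
  have hcLlt : L.card < l := by
    rcases lt_or_eq_of_le hcl with h1 | h1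
    · exact h1
    · exfalso
      apply h0
      rw [(Finset.eq_univ_of_card _ (by rw [h1]; simp) : L = Finset.univ)]
      exact Finset.mem_univ _
  have hcLlt' : L'.card < l := by
    rcases lt_or_eq_of_le hcl' with h1 | h1
    · exact h1
    · exfalso
      apply h0'
      rw [(Finset.eq_univ_of_card _ (by rw [h1]; simp) : L' = Finset.univ)]
      exact Finset.mem_univ _
  have hfun : vsplice l L = vsplice l L' := by
    funext i
    rw [← vspliceEquiv_apply, ← vspliceEquiv_apply, h]
  have hcc : L.card = L'.card := by
    have e1 : vsplice l L' ⟨L.card, hcLlt⟩ = 0 := by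
      rw [← hfun]; exact vsplice_card_val l L h0 hcLlt
    have e2 : vsplice l L' ⟨L'.card, hcLlt'⟩ = 0 := vsplice_card_val l L' h0' hcLlt'
    have := vsplice_injective l L' (e1.trans e2.symm)
    exact congrArg Fin.val this
  ext x
  rw [mem_vsplice_iff, mem_vsplice_iff, hfun, hcc]

lemma vsplice_mem_ValleyAsc (l : ℕ) [NeZero l] (hl : 2 ≤ l) (L : Finset (Fin l))
    (h0 : (0 : Fin l) ∉ L) (hne : L ≠ Finset.univ.erase 0) :
    vspliceEquiv l L ∈ ValleyAsc l := by
  have hsub : L ⊆ Finset.univ.erase 0 := by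
    intro x hx
    exact Finset.mem_erase.mpr ⟨fun hx0 => h0 (hx0 ▸ hx), Finset.mem_univ x⟩
  have hcard_le : L.card ≤ l - 1 := by
    have := Finset.card_le_card hsub
    rwa [Finset.card_erase_of_mem (Finset.mem_univ _), Finset.card_univ, Fintype.card_fin]
      at this
  have hcard : L.card ≤ l - 2 := by
    rcases Nat.lt_or_ge L.card (l - 1) with h1 | h1
    · omega
    · exfalso
      apply hne
      apply Finset.eq_of_subset_of_card_le hsub
      rw [Finset.card_erase_of_mem (Finset.mem_univ _), Finset.card_univ, Fintype.card_fin]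
      omega
  constructor
  · rintro i ⟨⟨h1, h2⟩, hab, hcb⟩
    by_cases hb : i - 1 < L.card
    · exact absurd (vsplice_desc l L ⟨i - 2, by omega⟩ ⟨i - 1, by omega⟩
        (show i - 2 < i - 1 by omega) hb) (asymm hab)
    · exact absurd (vsplice_asc l L ⟨i - 1, by omega⟩ ⟨i, by omega⟩
        (show i - 1 < i by omega) (show L.card ≤ i - 1 by omega)) (asymm hcb)
  · refine ⟨hl, ?_⟩
    exact vsplice_asc l L ⟨l - 2, by omega⟩ ⟨l - 1, by omega⟩
      (show l - 2 < l - 1 by omega) (show L.card ≤ l - 2 from hcard)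

lemma valleyAsc_surj (l : ℕ) [NeZero l] (hl : 2 ≤ l) (ρ : Equiv.Perm (Fin l))
    (hρ : ρ ∈ ValleyAsc l) :
    ∃ L : Finset (Fin l), (0 : Fin l) ∉ L ∧ L ≠ Finset.univ.erase 0 ∧ vspliceEquiv l L = ρ := by
  obtain ⟨hnp, hend⟩ := hρ
  obtain ⟨hl2, hendlt⟩ := hend
  obtain ⟨c, hcl, hρc⟩ : ∃ (c : ℕ) (hcl : c < l), ρ ⟨c, hcl⟩ = 0 := by
    refine ⟨((ρ.symm 0 : Fin l) : ℕ), (ρ.symm 0).isLt, ?_⟩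
    have e : (⟨((ρ.symm 0 : Fin l) : ℕ), (ρ.symm 0).isLt⟩ : Fin l) = ρ.symm 0 := Fin.ext rfl
    rw [e, Equiv.apply_symm_apply]
  have fcong : ∀ (a b : ℕ) (ha : a < l) (hb : b < l), a = b → ρ ⟨a, ha⟩ = ρ ⟨b, hb⟩ := by
    intro a b ha hb h; subst h; rfl
  have hvalne : ∀ (a b : ℕ) (ha : a < l) (hb : b < l), a ≠ b → ρ ⟨a, ha⟩ ≠ ρ ⟨b, hb⟩ := by
    intro a b ha hb hab he
    exact hab (congrArg Fin.val (ρ.injective he))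
  have asc_step : ∀ x : ℕ, (hx : x + 2 < l) → ρ ⟨x, by omega⟩ < ρ ⟨x + 1, by omega⟩ →
      ρ ⟨x + 1, by omega⟩ < ρ ⟨x + 2, by omega⟩ := by
    intro x hx h1
    rcases lt_or_gt_of_ne (hvalne (x + 2) (x + 1) (by omega) (by omega) (by omega)) with h2 | h2
    · exact absurd ⟨⟨by omega, hx⟩, h1, h2⟩ (hnp (x + 2))
    · exact h2
  have asc_chain : ∀ d x : ℕ, (h : x + d + 1 < l) → ρ ⟨x, by omega⟩ < ρ ⟨x + 1, by omega⟩ →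
      ρ ⟨x + d, by omega⟩ < ρ ⟨x + d + 1, by omega⟩ := by
    intro d
    induction d with
    | zero => intro x h h1; exact h1
    | succ d ih =>
      intro x h h1
      exact asc_step (x + d) (by omega) (ih x (by omega) h1)
  have desc1 : ∀ x : ℕ, (hx : x < c) → ρ ⟨x + 1, by omega⟩ < ρ ⟨x, by omega⟩ := by
    intro x hx
    by_contra hcon
    have h1 : ρ ⟨x, by omega⟩ < ρ ⟨x + 1, by omega⟩ :=
      lt_of_le_of_ne (not_lt.mp hcon) (hvalne (x + 1) x (by omega) (by omega) (by omega)).symm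
    have h2 := asc_chain (c - 1 - x) x (by omega) h1
    have heq : ρ ⟨x + (c - 1 - x) + 1, by omega⟩ = 0 :=
      (fcong (x + (c - 1 - x) + 1) c (by omega) hcl (by omega)).trans hρc
    have h3 := lt_of_lt_of_eq h2 heq
    exact absurd h3 (not_lt.mpr (Fin.zero_le _))
  have desc_chain : ∀ a b : ℕ, (hab : a < b) → (hbc : b ≤ c) →
      ρ ⟨b, by omega⟩ < ρ ⟨a, by omega⟩ := by
    intro a b hab hbc
    induction b with
    | zero => omega
    | succ b ih =>
      rcases Nat.lt_or_ge a b with h1 | h1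
      · exact lt_trans (desc1 b (by omega)) (ih h1 (by omega))
      · have hab' : a = b := by omega
        subst hab'
        exact desc1 a (by omega)
  have asc1 : ∀ x : ℕ, c ≤ x → (hx : x + 1 < l) → ρ ⟨x, by omega⟩ < ρ ⟨x + 1, by omega⟩ := by
    intro x
    induction x with
    | zero =>
      intro hcx hx
      have h0 : ρ ⟨0, by omega⟩ = 0 := (fcong 0 c (by omega) hcl (by omega)).trans hρc
      exact lt_of_eq_of_lt h0 (lt_of_le_of_ne (Fin.zero_le _)
        (fun he => hvalne 0 1 (by omega) (by omega) (by omega) (h0.trans he)))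
    | succ x ih =>
      intro hcx hx
      rcases Nat.lt_or_ge x c with h1 | h1
      · have h0 : ρ ⟨x + 1, by omega⟩ = 0 :=
          (fcong (x + 1) c (by omega) hcl (by omega)).trans hρc
        exact lt_of_eq_of_lt h0 (lt_of_le_of_ne (Fin.zero_le _)
          (fun he => hvalne (x + 1) (x + 2) (by omega) (by omega) (by omega) (h0.trans he)))
      · exact asc_step x (by omega) (ih h1 (by omega))
  have asc_chain2 : ∀ a b : ℕ, c ≤ a → (hab : a < b) → (hb : b < l) →
      ρ ⟨a, by omega⟩ < ρ ⟨b, by omega⟩ := by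
    intro a b hca hab hb
    induction b with
    | zero => omega
    | succ b ih =>
      rcases Nat.lt_or_ge a b with h1 | h1
      · exact lt_trans (ih h1 (by omega)) (asc1 b (by omega) (by omega))
      · have hab' : a = b := by omega
        subst hab'
        exact asc1 a (by omega) (by omega)
  have hcle2 : c ≤ l - 2 := by
    by_contra hcon
    have h1 := desc1 (l - 2) (by omega)
    have heq : ρ ⟨l - 2 + 1, by omega⟩ = ρ ⟨l - 1, by omega⟩ :=
      fcong (l - 2 + 1) (l - 1) (by omega) (by omega) (by omega)
    exact absurd hendlt (asymm (lt_of_eq_of_lt heq.symm h1))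
  obtain ⟨L, hLdef⟩ : ∃ L : Finset (Fin l), L = Finset.image
      (fun j : Fin c => ρ ⟨(j : ℕ), by have := j.isLt; omega⟩) Finset.univ := ⟨_, rfl⟩
  have hLinj : Function.Injective (fun j : Fin c => ρ ⟨(j : ℕ), by have := j.isLt; omega⟩) := by
    intro a b hab
    have h1 := ρ.injective hab
    have h2 := congrArg Fin.val h1
    exact Fin.ext h2
  have hLcard : L.card = c := by
    rw [hLdef, Finset.card_image_of_injective _ hLinj]; simp
  have hLmem : ∀ x : Fin l, x ∈ L ↔ ∃ (a : ℕ) (ha : a < c), ρ ⟨a, Nat.lt_trans ha hcl⟩ = x := by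
    intro x
    rw [hLdef]
    rw [Finset.mem_image]
    constructor
    · rintro ⟨a, -, ha⟩
      exact ⟨(a : ℕ), a.isLt, ha⟩
    · rintro ⟨a, ha, hx⟩
      exact ⟨⟨a, ha⟩, Finset.mem_univ _, hx⟩
  have h0L : (0 : Fin l) ∉ L := by
    rw [hLmem]
    rintro ⟨a, ha, hx⟩
    have h1 := hvalne a c (by omega) hcl (by omega)
    exact h1 (hx.trans hρc.symm)
  refine ⟨L, h0L, ?_, ?_⟩
  · intro heq
    have hcard2 := congrArg Finset.card heq
    rw [hLcard, Finset.card_erase_of_mem (Finset.mem_univ _), Finset.card_univ,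
      Fintype.card_fin] at hcard2
    omega
  · apply Equiv.ext
    intro i
    rw [vspliceEquiv_apply]
    unfold vsplice
    by_cases hi : (i : ℕ) < L.card
    · rw [dif_pos hi]
      have hfu := Finset.orderEmbOfFin_unique (rfl : L.card = L.card)
        (f := fun j : Fin L.card => ρ ⟨c - 1 - (j : ℕ), by omega⟩) ?_ ?_
      · have h2 := congrFun hfu ⟨L.card - 1 - (i : ℕ), by omega⟩
        rw [← h2]
        exact fcong _ _ _ i.isLt
          (show c - 1 - (L.card - 1 - (i : ℕ)) = (i : ℕ) by omega) |>.trans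
          (congrArg ρ (Fin.ext rfl))
      · intro j
        rw [hLmem]
        exact ⟨c - 1 - (j : ℕ), by have := j.isLt; omega, rfl⟩
      · intro j j' hjj
        exact desc_chain (c - 1 - (j' : ℕ)) (c - 1 - (j : ℕ))
          (by have := j.isLt; have := j'.isLt; omega) (by omega)
    · rw [dif_neg hi]
      have hfu := Finset.orderEmbOfFin_unique
        (show Lᶜ.card = l - L.card by simp [Finset.card_compl])
        (f := fun j : Fin (l - L.card) => ρ ⟨c + (j : ℕ), by have := j.isLt; omega⟩) ?_ ?_
      · have h2 := congrFun hfu ⟨(i : ℕ) - L.card, by have := i.isLt; omega⟩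
        rw [← h2]
        exact fcong _ _ _ i.isLt
          (show c + ((i : ℕ) - L.card) = (i : ℕ) by omega) |>.trans
          (congrArg ρ (Fin.ext rfl))
      · intro j
        rw [Finset.mem_compl, hLmem]
        rintro ⟨a, ha, hx⟩
        have : a = c + (j : ℕ) := congrArg Fin.val (ρ.injective hx)
        omega
      · intro j j' hjj
        exact asc_chain2 (c + (j : ℕ)) (c + (j' : ℕ)) (by omega) (by omega)
          (by have := j'.isLt; omega)

lemma ncard_ValleyAsc (l : ℕ) (hl : 2 ≤ l) : (ValleyAsc l).ncard = 2 ^ (l - 1) - 1 := by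
  haveI : NeZero l := ⟨by omega⟩
  set Bf : Finset (Finset (Fin l)) :=
    ((Finset.univ.erase (0 : Fin l)).powerset).erase (Finset.univ.erase 0) with hBf
  have hBmem : ∀ L : Finset (Fin l),
      L ∈ Bf ↔ (0 : Fin l) ∉ L ∧ L ≠ Finset.univ.erase 0 := by
    intro L
    rw [hBf, Finset.mem_erase, Finset.mem_powerset]
    constructor
    · rintro ⟨hne, hsub⟩
      exact ⟨fun h0 => (Finset.mem_erase.mp (hsub h0)).1 rfl, hne⟩
    · rintro ⟨h0, hne⟩
      refine ⟨hne, fun x hx => Finset.mem_erase.mpr ⟨fun hx0 => h0 (hx0 ▸ hx),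
        Finset.mem_univ x⟩⟩
  have himg : ValleyAsc l = vspliceEquiv l '' (Bf : Set (Finset (Fin l))) := by
    ext ρ
    constructor
    · intro hρ
      obtain ⟨L, h0, hne, hL⟩ := valleyAsc_surj l hl ρ hρ
      exact ⟨L, (hBmem L).mpr ⟨h0, hne⟩, hL⟩
    · rintro ⟨L, hLmem, rfl⟩
      obtain ⟨h0, hne⟩ := (hBmem L).mp hLmem
      exact vsplice_mem_ValleyAsc l hl L h0 hne
  rw [himg, Set.ncard_image_of_injOn ?_, Set.ncard_coe_finset]
  · rw [hBf, Finset.card_erase_of_mem (Finset.mem_powerset_self _), Finset.card_powerset,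
      Finset.card_erase_of_mem (Finset.mem_univ _), Finset.card_univ, Fintype.card_fin]
  · intro L hL L' hL' h
    rw [Finset.mem_coe, hBmem] at hL hL'
    exact vsplice_inj_on l L L' hL.1 hL'.1 h

end Valley


lemma not_adjacent_peaks {n : ℕ} (π : Equiv.Perm (Fin n)) (i : ℕ)
    (h1 : IsPeak π i) (h2 : IsPeak π (i + 1)) : False := by
  obtain ⟨⟨hi1, hi2⟩, hab, hcb⟩ := h1
  obtain ⟨⟨hj1, hj2⟩, hab', hcb'⟩ := h2
  exact absurd hab' (asymm hcb)

lemma ppeak_iff_isPeak {n p : ℕ} (hpn : p ≤ n) (π : Equiv.Perm (Fin n)) (i : ℕ)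
    (hip : i < p) : PPeak p π i ↔ IsPeak π i := by
  constructor
  · rintro ⟨⟨h1, h2, h3⟩, hab, hcb⟩
    exact ⟨⟨h1, by omega⟩, hab, hcb⟩
  · rintro ⟨⟨h1, h2⟩, hab, hcb⟩
    exact ⟨⟨h1, hip, hpn⟩, hab, hcb⟩

lemma overlineP_disjoint {n : ℕ} (S T : Finset ℕ) (hST : S ≠ T) :
    Disjoint (overlineP n S) (overlineP n T) := by
  rw [Set.disjoint_left]
  rintro π ⟨hP, -⟩ ⟨hQ, -⟩
  exact hST (Finset.ext fun i => ((hP i).symm.trans (hQ i)))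

end Stmt3Aux


theorem stmt3 (n : ℕ) (S S₁ S₂ : Finset ℕ) (hS : S.Nonempty)
    (hSsub : ∀ x ∈ S, 0 < x ∧ x < n) (hadm : (peakSetEq n S).Nonempty)
    (m : ℕ) (hm : m = S.max' hS) (hS₁ : S₁ = S.erase m) (hS₂ : S₂ = insert (m - 1) S₁) :
    ((overlineP n S).ncard : ℤ) =
      (n.choose (m - 1) : ℤ) * (2 ^ (n - m) - 1) * ((peakSetEq (m - 1) S₁).ncard : ℤ)
        - ((overlineP n S₁).ncard : ℤ) - ((overlineP n S₂).ncard : ℤ) := by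
  classical
  open Stmt3Aux in
  -- basic facts about m and S
  obtain ⟨π₀, hπ₀⟩ := hadm
  have hmS : m ∈ S := hm ▸ S.max'_mem hS
  have hpeakS : ∀ x ∈ S, 1 < x ∧ x < n := by
    intro x hx
    obtain ⟨h, -⟩ := (hπ₀ x).mpr hx
    exact h
  have hm2 : 2 ≤ m := (hpeakS m hmS).1
  have hmn : m < n := (hpeakS m hmS).2
  have hmax : ∀ x ∈ S, x ≤ m := by
    intro x hx
    rw [hm]
    exact S.le_max' x hx
  have hm1S : m - 1 ∉ S := by
    intro hmem
    have h1 : IsPeak π₀ (m - 1) := (hπ₀ (m - 1)).mpr hmem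
    have h2 : IsPeak π₀ (m - 1 + 1) := by
      rw [show m - 1 + 1 = m by omega]
      exact (hπ₀ m).mpr hmS
    exact not_adjacent_peaks π₀ (m - 1) h1 h2
  have hS₁mem : ∀ x, x ∈ S₁ ↔ x ∈ S ∧ x < m - 1 := by
    intro x
    rw [hS₁, Finset.mem_erase]
    constructor
    · rintro ⟨hne, hx⟩
      refine ⟨hx, ?_⟩
      have := hmax x hx
      have : x ≠ m - 1 := fun h => hm1S (h ▸ hx)
      omega
    · rintro ⟨hx, hlt⟩
      exact ⟨by omega, hx⟩
  have hS₂mem : ∀ x, x ∈ S₂ ↔ x = m - 1 ∨ x ∈ S₁ := by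
    intro x
    rw [hS₂, Finset.mem_insert]
  set p : ℕ := m - 1 with hp
  have hpn : p ≤ n := by omega
  have hp2 : p + 2 ≤ n := by omega
  -- Step A : setX = overlineP S ∪ (overlineP S₁ ∪ overlineP S₂)
  have hXeq : setX n p S₁ = overlineP n S ∪ (overlineP n S₁ ∪ overlineP n S₂) := by
    ext π
    constructor
    · rintro ⟨hpre, hsuf, hE⟩
      have hlow : ∀ i, i < p → (IsPeak π i ↔ i ∈ S₁) := by
        intro i hip
        rw [← ppeak_iff_isPeak hpn π i hip]
        exact hpre i
      by_cases hpk2 : IsPeak π m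
      · -- peak set is S
        left
        refine ⟨?_, hE⟩
        intro i
        rcases Nat.lt_or_ge i p with h1 | h1
        · rw [hlow i h1, hS₁mem]
          constructor
          · exact fun h => h.1
          · intro h
            exact ⟨h, by omega⟩
        · rcases Nat.lt_or_ge i m with h2 | h2
          · -- i = m - 1
            have hieq : i = m - 1 := by omega
            subst hieq
            constructor
            · intro hpk1
              exfalso
              apply not_adjacent_peaks π (m - 1) hpk1
              rw [show m - 1 + 1 = m by omega]
              exact hpk2
            · intro h
              exact absurd h hm1S
          · rcases Nat.lt_or_ge m i with h3 | h3
            · constructor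
              · intro hpk
                exact absurd hpk (hsuf i (by omega))
              · intro h
                have := hmax i h
                omega
            · have : i = m := by omega
              subst this
              exact ⟨fun _ => hmS, fun _ => hpk2⟩
      · by_cases hpk1 : IsPeak π (m - 1)
        · -- peak set is S₂
          right; right
          refine ⟨?_, hE⟩
          intro i
          rcases Nat.lt_or_ge i p with h1 | h1
          · rw [hlow i h1, hS₂mem]
            constructor
            · intro h
              exact Or.inr h
            · rintro (h | h)
              · omega
              · exact h
          · rcases Nat.lt_or_ge i m with h2 | h2
            · have hieq : i = m - 1 := by omega
              subst hieq
              rw [hS₂mem]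
              exact ⟨fun _ => Or.inl rfl, fun _ => hpk1⟩
            · rcases Nat.lt_or_ge m i with h3 | h3
              · rw [hS₂mem]
                constructor
                · intro hpk
                  exact absurd hpk (hsuf i (by omega))
                · rintro (h | h)
                  · omega
                  · rw [hS₁mem] at h
                    omega
              · have : i = m := by omega
                subst this
                rw [hS₂mem]
                constructor
                · intro hpk
                  exact absurd hpk hpk2
                · rintro (h | h)
                  · omega
                  · rw [hS₁mem] at h
                    omega
        · -- peak set is S₁
          right; left
          refine ⟨?_, hE⟩
          intro i
          rcases Nat.lt_or_ge i p with h1 | h1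
          · exact hlow i h1
          · constructor
            · intro hpk
              exfalso
              rcases Nat.lt_or_ge i m with h2 | h2
              · exact hpk1 (by rw [show m - 1 = i by omega]; exact hpk)
              · rcases Nat.lt_or_ge m i with h3 | h3
                · exact hsuf i (by omega) hpk
                · exact hpk2 (by rw [show m = i by omega]; exact hpk)
            · intro h
              rw [hS₁mem] at h
              omega
    · rintro (⟨hP, hE⟩ | ⟨hP, hE⟩ | ⟨hP, hE⟩)
      · -- π ∈ overlineP n S
        refine ⟨?_, ?_, hE⟩
        · intro i
          constructor
          · rintro ⟨⟨h1, h2, h3⟩, hab, hcb⟩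
            have : IsPeak π i := ⟨⟨h1, by omega⟩, hab, hcb⟩
            rw [hP i] at this
            rw [hS₁mem]
            exact ⟨this, by omega⟩
          · intro h
            rw [hS₁mem] at h
            exact (ppeak_iff_isPeak hpn π i (by omega)).mpr ((hP i).mpr h.1)
        · intro i hi hpk
          have := hmax i ((hP i).mp hpk)
          omega
      · refine ⟨?_, ?_, hE⟩
        · intro i
          constructor
          · rintro ⟨⟨h1, h2, h3⟩, hab, hcb⟩
            exact (hP i).mp ⟨⟨h1, by omega⟩, hab, hcb⟩
          · intro h
            have hin := h
            rw [hS₁mem] at hin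
            exact (ppeak_iff_isPeak hpn π i (by omega)).mpr ((hP i).mpr h)
        · intro i hi hpk
          have := (hP i).mp hpk
          rw [hS₁mem] at this
          omega
      · refine ⟨?_, ?_, hE⟩
        · intro i
          constructor
          · rintro ⟨⟨h1, h2, h3⟩, hab, hcb⟩
            have : i ∈ S₂ := (hP i).mp ⟨⟨h1, by omega⟩, hab, hcb⟩
            rw [hS₂mem] at this
            rcases this with h | h
            · omega
            · exact h
          · intro h
            have hin := h
            rw [hS₁mem] at hin
            refine (ppeak_iff_isPeak hpn π i (by omega)).mpr ((hP i).mpr ?_)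
            rw [hS₂mem]
            exact Or.inr h
        · intro i hi hpk
          have := (hP i).mp hpk
          rw [hS₂mem, hS₁mem] at this
          omega
  -- distinctness of the three peak sets
  have hSS₁ : S ≠ S₁ := by
    intro h
    have : m ∈ S₁ := h ▸ hmS
    rw [hS₁mem] at this
    omega
  have hSS₂ : S ≠ S₂ := by
    intro h
    have : m ∈ S₂ := h ▸ hmS
    rw [hS₂mem, hS₁mem] at this
    omega
  have hS₁S₂ : S₁ ≠ S₂ := by
    intro h
    have : m - 1 ∈ S₁ := by
      rw [h, hS₂mem]
      exact Or.inl rfl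
    rw [hS₁mem] at this
    omega
  -- counting
  have hcard : (setX n p S₁).ncard =
      (overlineP n S).ncard + ((overlineP n S₁).ncard + (overlineP n S₂).ncard) := by
    rw [hXeq, Set.ncard_union_eq (Set.disjoint_union_right.mpr
        ⟨overlineP_disjoint S S₁ hSS₁, overlineP_disjoint S S₂ hSS₂⟩)
      (Set.toFinite _) (Set.toFinite _),
      Set.ncard_union_eq (overlineP_disjoint S₁ S₂ hS₁S₂) (Set.toFinite _) (Set.toFinite _)]
  have hcount : (setX n p S₁).ncard =
      n.choose p * (peakSetEq p S₁).ncard * (2 ^ (n - m) - 1) := by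
    rw [ncard_setX n p hp2 S₁, ncard_ValleyAsc (n - p) (by omega),
      show n - p - 1 = n - m by omega]
  rw [hcard] at hcount
  have h2pow : (1 : ℕ) ≤ 2 ^ (n - m) := Nat.one_le_two_pow
  have hZ : ((overlineP n S).ncard : ℤ) + ((overlineP n S₁).ncard : ℤ) +
      ((overlineP n S₂).ncard : ℤ) =
      (n.choose p : ℤ) * ((2 : ℤ) ^ (n - m) - 1) * ((peakSetEq p S₁).ncard : ℤ) := by
    have hc := congrArg (Nat.cast : ℕ → ℤ) hcount
    push_cast [Nat.cast_sub h2pow] at hc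
    linear_combination hc
  linarith [hZ]
end

section
/- Let S ⊆ {1,…,n−1} be a nonempty admissible set, let m = max(S), and set S₁ = S∖{m} and S₂ = S₁ ∪ {m−1}. Then |underline{P(S;n)}| = C(n, m−1)·|P(S₁;m−1)| − |underline{P(S₁;n)}| − |underline{P(S₂;n)}|, where C(a,b) denotes the binomial coefficient. -/
open Equiv

namespace Stmt5

variable {n : ℕ}

lemma papp_congr (π : Equiv.Perm (Fin n)) {a b : ℕ} (ha : a < n) (hb : b < n) (h : a = b) :
    π ⟨a, ha⟩ = π ⟨b, hb⟩ := by subst h; rfl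

lemma plt {π : Equiv.Perm (Fin n)} {a b a' b' : ℕ} {ha : a < n} {hb : b < n}
    {ha' : a' < n} {hb' : b' < n} (ea : a = a') (eb : b = b')
    (h : π ⟨a, ha⟩ < π ⟨b, hb⟩) : π ⟨a', ha'⟩ < π ⟨b', hb'⟩ := by
  subst ea; subst eb; exact h

lemma perm_lt_or_gt (π : Equiv.Perm (Fin n)) {i j : Fin n} (h : i ≠ j) :
    π i < π j ∨ π j < π i := by
  rcases lt_trichotomy (π i) (π j) with h1 | h1 | h1
  · exact Or.inl h1
  · exact absurd (π.injective h1) h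
  · exact Or.inr h1

def DecFrom (n : ℕ) (π : Equiv.Perm (Fin n)) (a : ℕ) : Prop :=
  ∀ i : ℕ, (h : i + 1 < n) → a ≤ i → π ⟨i + 1, h⟩ < π ⟨i, by omega⟩

lemma DecFrom.mono {π : Equiv.Perm (Fin n)} {a b : ℕ} (h : DecFrom n π a) (hab : a ≤ b) :
    DecFrom n π b := fun i hi hbi => h i hi (le_trans hab hbi)

lemma DecFrom.lt {π : Equiv.Perm (Fin n)} {a : ℕ} (hd : DecFrom n π a) (i j : ℕ) (hai : a ≤ i) :
    ∀ (_ : i < j) (hj : j < n), π ⟨j, hj⟩ < π ⟨i, by omega⟩ := by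
  induction j with
  | zero => intro hij; omega
  | succ j ih =>
    intro hij hj
    rcases Nat.lt_or_ge i j with h | h
    · exact lt_trans (hd j hj (by omega)) (ih h (by omega))
    · have hij' : i = j := by omega
      subst hij'
      exact hd i hj hai

lemma forced_dec (π : Equiv.Perm (Fin n)) (hn : 2 ≤ n) (b : ℕ) (hb : 2 ≤ b)
    (hdesc : EndsDescent n π)
    (hnopeak : ∀ p, b ≤ p → ¬ IsPeak π p) :
    DecFrom n π (b - 2) := by
  obtain ⟨hn2, hdesc2⟩ := hdesc
  have key : ∀ d j, (hj : j + 1 < n) → b - 2 ≤ j → n - 2 - j = d →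
      π ⟨j + 1, hj⟩ < π ⟨j, by omega⟩ := by
    intro d
    induction d with
    | zero =>
      intro j hj hbj hd
      have hje : j = n - 2 := by omega
      subst hje
      exact plt (by omega) (by omega) hdesc2
    | succ d ih =>
      intro j hj hbj hd
      have hj2 : j + 1 + 1 < n := by omega
      have h1 := ih (j + 1) hj2 (by omega) (by omega)
      rcases perm_lt_or_gt π (show (⟨j+1, hj⟩ : Fin n) ≠ ⟨j, by omega⟩ from
        Fin.ne_of_val_ne (show j + 1 ≠ j by omega)) with h | h
      · exact h
      · exfalso
        refine hnopeak (j + 2) (by omega) ⟨⟨by omega, by omega⟩, ?_, ?_⟩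
        · exact plt (by omega) (by omega) h
        · exact plt (by omega) (by omega) h1
  intro i hi hbi
  exact key (n - 2 - i) i hi hbi rfl

def Dset (n m : ℕ) (S₁ : Finset ℕ) : Set (Equiv.Perm (Fin n)) :=
  {π | (∀ p : ℕ, (IsPeak π p ∧ p ≤ m - 2) ↔ p ∈ S₁) ∧ DecFrom n π (m - 1)}

variable {m : ℕ} {S₁ : Finset ℕ}

lemma claimA (hm : 2 ≤ m) (hmn : m < n) (hb : ∀ p ∈ S₁, 2 ≤ p ∧ p + 2 ≤ m) :
    underlineP n (insert m S₁) =
      {π ∈ Dset n m S₁ | π ⟨m - 2, by omega⟩ < π ⟨m - 1, by omega⟩} := by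
  ext π
  simp only [underlineP, Dset, peakSetEq, Set.mem_setOf_eq]
  constructor
  · rintro ⟨hpeak, hdesc⟩
    have hpm := (hpeak m).mpr (Finset.mem_insert_self m S₁)
    obtain ⟨⟨h1m, h2m⟩, hA, hB⟩ := hpm
    have hnop : ∀ p, m + 1 ≤ p → ¬IsPeak π p := by
      intro p hp hP
      rcases Finset.mem_insert.mp ((hpeak p).mp hP) with h | h
      · omega
      · have := hb p h; omega
    have hdec : DecFrom n π (m - 1) :=
      (forced_dec π (by omega) (m + 1) (by omega) hdesc hnop).mono (by omega)
    refine ⟨⟨?_, hdec⟩, plt (by omega) (by omega) hA⟩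
    intro p
    constructor
    · rintro ⟨hP, hple⟩
      rcases Finset.mem_insert.mp ((hpeak p).mp hP) with h | h
      · omega
      · exact h
    · intro hp
      exact ⟨(hpeak p).mpr (Finset.mem_insert_of_mem hp), by have := hb p hp; omega⟩
  · rintro ⟨⟨hpre, hdec⟩, hj⟩
    have hdescE : EndsDescent n π :=
      ⟨by omega, hdec.lt (n - 2) (n - 1) (by omega) (by omega) (by omega)⟩
    refine ⟨?_, hdescE⟩
    intro p
    constructor
    · intro hP
      by_cases hc : p ≤ m - 2
      · exact Finset.mem_insert_of_mem ((hpre p).mp ⟨hP, hc⟩)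
      · obtain ⟨⟨hp1, hp2⟩, hPA, hPB⟩ := hP
        rcases Nat.lt_or_ge p m with h | h
        · exfalso
          have hx : π ⟨m - 1, by omega⟩ < π ⟨m - 2, by omega⟩ :=
            plt (by omega) (by omega) hPB
          exact absurd hj (asymm hx)
        · rcases Nat.eq_or_lt_of_le h with h' | h'
          · exact Finset.mem_insert.mpr (Or.inl (by omega))
          · exfalso
            exact absurd hPA (asymm (hdec.lt (p - 2) (p - 1) (by omega) (by omega) (by omega)))
    · intro hp
      rcases Finset.mem_insert.mp hp with h | h
      · subst h
        exact ⟨⟨by omega, by omega⟩, hj, hdec.lt (p - 1) p (by omega) (by omega) (by omega)⟩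
      · exact ((hpre p).mpr h).1

lemma claimB (hm : 2 ≤ m) (hmn : m < n) (hb : ∀ p ∈ S₁, 2 ≤ p ∧ p + 2 ≤ m) :
    underlineP n (insert (m - 1) S₁) =
      {π ∈ Dset n m S₁ | π ⟨m - 1, by omega⟩ < π ⟨m - 2, by omega⟩ ∧ 3 ≤ m ∧
        π ⟨m - 3, by omega⟩ < π ⟨m - 2, by omega⟩} := by
  ext π
  simp only [underlineP, Dset, peakSetEq, Set.mem_setOf_eq]
  constructor
  · rintro ⟨hpeak, hdesc⟩
    have hpm := (hpeak (m - 1)).mpr (Finset.mem_insert_self (m - 1) S₁)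
    obtain ⟨⟨h1m, h2m⟩, hA, hB⟩ := hpm
    have hm3 : 3 ≤ m := by omega
    have hnop : ∀ p, m ≤ p → ¬IsPeak π p := by
      intro p hp hP
      rcases Finset.mem_insert.mp ((hpeak p).mp hP) with h | h
      · omega
      · have := hb p h; omega
    have hdec0 := forced_dec π (by omega) m (by omega) hdesc hnop
    refine ⟨⟨?_, hdec0.mono (by omega)⟩, plt (by omega) (by omega) hB, hm3,
      plt (by omega) (by omega) hA⟩
    intro p
    constructor
    · rintro ⟨hP, hple⟩
      rcases Finset.mem_insert.mp ((hpeak p).mp hP) with h | h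
      · omega
      · exact h
    · intro hp
      exact ⟨(hpeak p).mpr (Finset.mem_insert_of_mem hp), by have := hb p hp; omega⟩
  · rintro ⟨⟨hpre, hdec⟩, hj, hm3, hj2⟩
    have hdescE : EndsDescent n π :=
      ⟨by omega, hdec.lt (n - 2) (n - 1) (by omega) (by omega) (by omega)⟩
    refine ⟨?_, hdescE⟩
    intro p
    constructor
    · intro hP
      by_cases hc : p ≤ m - 2
      · exact Finset.mem_insert_of_mem ((hpre p).mp ⟨hP, hc⟩)
      · obtain ⟨⟨hp1, hp2⟩, hPA, hPB⟩ := hP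
        rcases Nat.lt_or_ge p m with h | h
        · exact Finset.mem_insert.mpr (Or.inl (by omega))
        · rcases Nat.eq_or_lt_of_le h with h' | h'
          · exfalso
            have hx : π ⟨m - 2, by omega⟩ < π ⟨m - 1, by omega⟩ :=
              plt (by omega) (by omega) hPA
            exact absurd hj (asymm hx)
          · exfalso
            exact absurd hPA (asymm (hdec.lt (p - 2) (p - 1) (by omega) (by omega) (by omega)))
    · intro hp
      rcases Finset.mem_insert.mp hp with h | h
      · subst h
        exact ⟨⟨by omega, by omega⟩, plt (by omega) (by omega) hj2,
          plt (by omega) (by omega) hj⟩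
      · exact ((hpre p).mpr h).1

lemma claimC (hm : 2 ≤ m) (hmn : m < n) (hb : ∀ p ∈ S₁, 2 ≤ p ∧ p + 2 ≤ m) :
    underlineP n S₁ =
      {π ∈ Dset n m S₁ | π ⟨m - 1, by omega⟩ < π ⟨m - 2, by omega⟩ ∧
        (m = 2 ∨ π ⟨m - 2, by omega⟩ < π ⟨m - 3, by omega⟩)} := by
  ext π
  simp only [underlineP, Dset, peakSetEq, Set.mem_setOf_eq]
  constructor
  · rintro ⟨hpeak, hdesc⟩
    have hnop : ∀ p, m - 1 ≤ p → ¬IsPeak π p := by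
      intro p hp hP
      have := hb p ((hpeak p).mp hP); omega
    have hprefix : ∀ p : ℕ, (IsPeak π p ∧ p ≤ m - 2) ↔ p ∈ S₁ := by
      intro p
      constructor
      · rintro ⟨hP, -⟩; exact (hpeak p).mp hP
      · intro hp; have := hb p hp; exact ⟨(hpeak p).mpr hp, by omega⟩
    rcases Nat.eq_or_lt_of_le hm with hm2 | hm3
    · have hdec := forced_dec π (by omega) 2 (by omega) hdesc
        (fun p hp hP => hnop p (by omega) hP)
      exact ⟨⟨hprefix, hdec.mono (by omega)⟩,
        hdec.lt (m - 2) (m - 1) (by omega) (by omega) (by omega), Or.inl hm2.symm⟩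
    · have hdec := forced_dec π (by omega) (m - 1) (by omega) hdesc hnop
      exact ⟨⟨hprefix, hdec.mono (by omega)⟩,
        hdec.lt (m - 2) (m - 1) (by omega) (by omega) (by omega),
        Or.inr (hdec.lt (m - 3) (m - 2) (by omega) (by omega) (by omega))⟩
  · rintro ⟨⟨hpre, hdec⟩, hj, halt⟩
    have hdescE : EndsDescent n π :=
      ⟨by omega, hdec.lt (n - 2) (n - 1) (by omega) (by omega) (by omega)⟩
    refine ⟨?_, hdescE⟩
    intro p
    constructor
    · intro hP
      by_cases hc : p ≤ m - 2
      · exact (hpre p).mp ⟨hP, hc⟩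
      · exfalso
        obtain ⟨⟨hp1, hp2⟩, hPA, hPB⟩ := hP
        rcases Nat.lt_or_ge p m with h | h
        · rcases halt with hm2 | hj2
          · omega
          · have hx : π ⟨m - 3, by omega⟩ < π ⟨m - 2, by omega⟩ :=
              plt (by omega) (by omega) hPA
            exact absurd hj2 (asymm hx)
        · rcases Nat.eq_or_lt_of_le h with h' | h'
          · have hx : π ⟨m - 2, by omega⟩ < π ⟨m - 1, by omega⟩ :=
              plt (by omega) (by omega) hPA
            exact absurd hj (asymm hx)
          · exact absurd hPA (asymm (hdec.lt (p - 2) (p - 1) (by omega) (by omega) (by omega)))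
    · intro hp
      exact ((hpre p).mpr hp).1

lemma Dset_eq_union (hm : 2 ≤ m) (hmn : m < n) :
    Dset n m S₁ =
      {π ∈ Dset n m S₁ | π ⟨m - 2, by omega⟩ < π ⟨m - 1, by omega⟩} ∪
      ({π ∈ Dset n m S₁ | π ⟨m - 1, by omega⟩ < π ⟨m - 2, by omega⟩ ∧ 3 ≤ m ∧
          π ⟨m - 3, by omega⟩ < π ⟨m - 2, by omega⟩} ∪
       {π ∈ Dset n m S₁ | π ⟨m - 1, by omega⟩ < π ⟨m - 2, by omega⟩ ∧
          (m = 2 ∨ π ⟨m - 2, by omega⟩ < π ⟨m - 3, by omega⟩)}) := by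
  ext π
  simp only [Set.mem_union, Set.mem_setOf_eq]
  constructor
  · intro hD
    rcases perm_lt_or_gt π (show (⟨m - 2, by omega⟩ : Fin n) ≠ ⟨m - 1, by omega⟩ from
      Fin.ne_of_val_ne (show m - 2 ≠ m - 1 by omega)) with h | h
    · exact Or.inl ⟨hD, h⟩
    · rcases Nat.eq_or_lt_of_le hm with hm2 | hm3
      · exact Or.inr (Or.inr ⟨hD, h, Or.inl hm2.symm⟩)
      · rcases perm_lt_or_gt π (show (⟨m - 3, by omega⟩ : Fin n) ≠ ⟨m - 2, by omega⟩ from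
          Fin.ne_of_val_ne (show m - 3 ≠ m - 2 by omega)) with h2 | h2
        · exact Or.inr (Or.inl ⟨hD, h, by omega, h2⟩)
        · exact Or.inr (Or.inr ⟨hD, h, Or.inr h2⟩)
  · rintro (⟨h, -⟩ | ⟨h, -⟩ | ⟨h, -⟩) <;> exact h

lemma disj23 (hm : 2 ≤ m) (hmn : m < n) :
    Disjoint
      {π ∈ Dset n m S₁ | π ⟨m - 1, by omega⟩ < π ⟨m - 2, by omega⟩ ∧ 3 ≤ m ∧
          π ⟨m - 3, by omega⟩ < π ⟨m - 2, by omega⟩}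
      {π ∈ Dset n m S₁ | π ⟨m - 1, by omega⟩ < π ⟨m - 2, by omega⟩ ∧
          (m = 2 ∨ π ⟨m - 2, by omega⟩ < π ⟨m - 3, by omega⟩)} := by
  rw [Set.disjoint_left]
  rintro π ⟨-, -, h3, h4⟩ ⟨-, -, halt⟩
  rcases halt with h | h
  · omega
  · exact absurd h4 (asymm h)

lemma disj1 (hm : 2 ≤ m) (hmn : m < n) :
    Disjoint
      {π ∈ Dset n m S₁ | π ⟨m - 2, by omega⟩ < π ⟨m - 1, by omega⟩}
      ({π ∈ Dset n m S₁ | π ⟨m - 1, by omega⟩ < π ⟨m - 2, by omega⟩ ∧ 3 ≤ m ∧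
          π ⟨m - 3, by omega⟩ < π ⟨m - 2, by omega⟩} ∪
       {π ∈ Dset n m S₁ | π ⟨m - 1, by omega⟩ < π ⟨m - 2, by omega⟩ ∧
          (m = 2 ∨ π ⟨m - 2, by omega⟩ < π ⟨m - 3, by omega⟩)}) := by
  rw [Set.disjoint_left]
  rintro π ⟨-, hA⟩ (⟨-, hd, -⟩ | ⟨-, hd, -⟩) <;> exact absurd hA (asymm hd)

lemma card_compl' (k : ℕ) (T : Finset (Fin n)) (hT : T.card = k) : Tᶜ.card = n - k := by
  rw [Finset.card_compl, hT, Fintype.card_fin]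

def buildFun (n k : ℕ) (hk : k < n) (T : Finset (Fin n)) (hT : T.card = k)
    (σ : Equiv.Perm (Fin k)) : Fin n → Fin n :=
  fun i =>
    if h : (i : ℕ) < k then T.orderEmbOfFin hT (σ ⟨i, h⟩)
    else Tᶜ.orderEmbOfFin (card_compl' k T hT) ⟨n - 1 - i, by have := i.isLt; omega⟩

lemma buildFun_injective (n k : ℕ) (hk : k < n) (T : Finset (Fin n)) (hT : T.card = k)
    (σ : Equiv.Perm (Fin k)) : Function.Injective (buildFun n k hk T hT σ) := by
  intro i j hij
  unfold buildFun at hij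
  by_cases hi : (i : ℕ) < k <;> by_cases hj : (j : ℕ) < k
  · rw [dif_pos hi, dif_pos hj] at hij
    have h1 := σ.injective ((T.orderEmbOfFin hT).injective hij)
    have h2 := congrArg Fin.val h1
    exact Fin.ext h2
  · rw [dif_pos hi, dif_neg hj] at hij
    exfalso
    have h1 := Finset.orderEmbOfFin_mem T hT (σ ⟨i, hi⟩)
    rw [hij] at h1
    exact (Finset.mem_compl.mp (Finset.orderEmbOfFin_mem Tᶜ (card_compl' k T hT) _)) h1
  · rw [dif_neg hi, dif_pos hj] at hij
    exfalso
    have h1 := Finset.orderEmbOfFin_mem T hT (σ ⟨j, hj⟩)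
    rw [← hij] at h1
    exact (Finset.mem_compl.mp (Finset.orderEmbOfFin_mem Tᶜ (card_compl' k T hT) _)) h1
  · rw [dif_neg hi, dif_neg hj] at hij
    have h1 := (Tᶜ.orderEmbOfFin (card_compl' k T hT)).injective hij
    have h2 : n - 1 - (i : ℕ) = n - 1 - (j : ℕ) := congrArg Fin.val h1
    have := i.isLt; have := j.isLt
    exact Fin.ext (by omega)

noncomputable def build (n k : ℕ) (hk : k < n) (T : Finset (Fin n)) (hT : T.card = k)
    (σ : Equiv.Perm (Fin k)) : Equiv.Perm (Fin n) :=
  Equiv.ofBijective _ (Finite.injective_iff_bijective.mp (buildFun_injective n k hk T hT σ))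

lemma build_apply_lt (n k : ℕ) (hk : k < n) (T : Finset (Fin n)) (hT : T.card = k)
    (σ : Equiv.Perm (Fin k)) (a : ℕ) (ha : a < k) (han : a < n) :
    build n k hk T hT σ ⟨a, han⟩ = T.orderEmbOfFin hT (σ ⟨a, ha⟩) := by
  show buildFun n k hk T hT σ ⟨a, han⟩ = _
  unfold buildFun
  split
  · rfl
  · exact absurd ha ‹¬_›

lemma build_apply_ge (n k : ℕ) (hk : k < n) (T : Finset (Fin n)) (hT : T.card = k)
    (σ : Equiv.Perm (Fin k)) (a : ℕ) (ha : k ≤ a) (han : a < n) :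
    build n k hk T hT σ ⟨a, han⟩ =
      Tᶜ.orderEmbOfFin (card_compl' k T hT) ⟨n - 1 - a, by omega⟩ := by
  show buildFun n k hk T hT σ ⟨a, han⟩ = _
  unfold buildFun
  split
  · exact absurd ‹_› (not_lt.mpr ha)
  · rfl

lemma build_lt_iff (n k : ℕ) (hk : k < n) (T : Finset (Fin n)) (hT : T.card = k)
    (σ : Equiv.Perm (Fin k)) (a b : ℕ) (ha : a < k) (hb : b < k) (han : a < n) (hbn : b < n) :
    build n k hk T hT σ ⟨a, han⟩ < build n k hk T hT σ ⟨b, hbn⟩ ↔ σ ⟨a, ha⟩ < σ ⟨b, hb⟩ := by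
  rw [build_apply_lt n k hk T hT σ a ha han, build_apply_lt n k hk T hT σ b hb hbn,
    OrderEmbedding.lt_iff_lt]

lemma build_mem_Dset (hm : 2 ≤ m) (hmn : m < n) (T : Finset (Fin n)) (hT : T.card = m - 1)
    (σ : Equiv.Perm (Fin (m - 1))) (hσ : σ ∈ peakSetEq (m - 1) S₁) :
    build n (m - 1) (by omega) T hT σ ∈ Dset n m S₁ := by
  constructor
  · intro p
    constructor
    · rintro ⟨⟨⟨hp1, hp2⟩, hPA, hPB⟩, hple⟩
      apply (hσ p).mp
      refine ⟨⟨hp1, by omega⟩, ?_, ?_⟩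
      · exact (build_lt_iff n (m-1) (by omega) T hT σ (p-2) (p-1)
          (by omega) (by omega) (by omega) (by omega)).mp hPA
      · exact (build_lt_iff n (m-1) (by omega) T hT σ p (p-1)
          (by omega) (by omega) (by omega) (by omega)).mp hPB
    · intro hp
      obtain ⟨⟨hp1, hp2⟩, hA, hB⟩ := (hσ p).mpr hp
      refine ⟨⟨⟨hp1, by omega⟩, ?_, ?_⟩, by omega⟩
      · exact (build_lt_iff n (m-1) (by omega) T hT σ (p-2) (p-1)
          (by omega) (by omega) (by omega) (by omega)).mpr hA
      · exact (build_lt_iff n (m-1) (by omega) T hT σ p (p-1)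
          (by omega) (by omega) (by omega) (by omega)).mpr hB
  · intro i hi1 hik
    rw [build_apply_ge n (m-1) (by omega) T hT σ (i+1) (by omega) hi1,
      build_apply_ge n (m-1) (by omega) T hT σ i (by omega) (by omega)]
    exact (Tᶜ.orderEmbOfFin _).strictMono (Fin.mk_lt_mk.mpr (by omega))

lemma Dset_subset_image (hm : 2 ≤ m) (hmn : m < n) (π : Equiv.Perm (Fin n))
    (hπ : π ∈ Dset n m S₁) :
    ∃ (T : Finset (Fin n)) (hT : T.card = m - 1) (σ : Equiv.Perm (Fin (m - 1))),
      σ ∈ peakSetEq (m - 1) S₁ ∧ build n (m - 1) (by omega) T hT σ = π := by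
  obtain ⟨hpre, hdec⟩ := hπ
  have hk : m - 1 < n := by omega
  have hprefix_inj : Function.Injective (fun i : Fin (m - 1) => π ⟨i, by omega⟩) := by
    intro i j hij
    simp only at hij
    have h1 := π.injective hij
    have h2 := congrArg Fin.val h1
    exact Fin.ext h2
  set T : Finset (Fin n) := Finset.image (fun i : Fin (m - 1) => π ⟨i, by omega⟩) Finset.univ
    with hTdef
  have hT : T.card = m - 1 := by
    rw [hTdef, Finset.card_image_of_injective _ hprefix_inj, Finset.card_univ, Fintype.card_fin]
  have hmemT : ∀ i : Fin (m - 1), π ⟨i, by omega⟩ ∈ T := fun i =>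
    Finset.mem_image_of_mem _ (Finset.mem_univ i)
  set iso := T.orderIsoOfFin hT with hisodef
  set σ0 : Fin (m - 1) → Fin (m - 1) := fun i => iso.symm ⟨π ⟨i, by omega⟩, hmemT i⟩
    with hσ0def
  have hσ0inj : Function.Injective σ0 := by
    intro i j hij
    have h1 := iso.symm.injective hij
    exact hprefix_inj (Subtype.ext_iff.mp h1)
  set σ : Equiv.Perm (Fin (m - 1)) :=
    Equiv.ofBijective σ0 (Finite.injective_iff_bijective.mp hσ0inj) with hσdef
  have hkey : ∀ i : Fin (m - 1), T.orderEmbOfFin hT (σ i) = π ⟨i, by omega⟩ := by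
    intro i
    have h1 : T.orderEmbOfFin hT (σ i) = ((iso (σ i) : {x // x ∈ T}) : Fin n) :=
      (Finset.coe_orderIsoOfFin_apply T hT (σ i)).symm
    rw [h1]
    show ((iso (σ0 i) : {x // x ∈ T}) : Fin n) = _
    rw [hσ0def]
    simp only [OrderIso.apply_symm_apply]
  have hcmp : ∀ i j : Fin (m - 1), σ i < σ j ↔ π ⟨i, by omega⟩ < π ⟨j, by omega⟩ := by
    intro i j
    constructor
    · intro h
      have h2 := (T.orderEmbOfFin hT).strictMono h
      rwa [hkey i, hkey j] at h2
    · intro h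
      have h2 : T.orderEmbOfFin hT (σ i) < T.orderEmbOfFin hT (σ j) := by
        rw [hkey i, hkey j]; exact h
      exact (OrderEmbedding.lt_iff_lt _).mp h2
  have hσmem : σ ∈ peakSetEq (m - 1) S₁ := by
    intro p
    constructor
    · rintro ⟨⟨hp1, hp2⟩, hA, hB⟩
      apply (hpre p).mp
      refine ⟨⟨⟨hp1, by omega⟩, ?_, ?_⟩, by omega⟩
      · exact (hcmp ⟨p - 2, by omega⟩ ⟨p - 1, by omega⟩).mp hA
      · exact (hcmp ⟨p, hp2⟩ ⟨p - 1, by omega⟩).mp hB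
    · intro hp
      obtain ⟨⟨⟨hp1, hpn⟩, hA, hB⟩, hple⟩ := (hpre p).mpr hp
      refine ⟨⟨hp1, by omega⟩, ?_, ?_⟩
      · exact (hcmp ⟨p - 2, by omega⟩ ⟨p - 1, by omega⟩).mpr hA
      · exact (hcmp ⟨p, by omega⟩ ⟨p - 1, by omega⟩).mpr hB
  have hTc := card_compl' (m - 1) T hT
  set f : Fin (n - (m - 1)) → Fin n :=
    (fun x => π ⟨n - 1 - x, by have := x.isLt; omega⟩) with hfdef
  have hfmem : ∀ x, f x ∈ Tᶜ := by
    intro x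
    rw [Finset.mem_compl]
    intro hmem
    rw [hTdef] at hmem
    obtain ⟨i, -, hi⟩ := Finset.mem_image.mp hmem
    have h1 := congrArg Fin.val (π.injective hi)
    have hx := x.isLt
    have hi2 := i.isLt
    simp only [Fin.val_mk] at h1
    omega
  have hfmono : StrictMono f := by
    intro x y hxy
    have hx := x.isLt
    have hy := y.isLt
    have hxy' : (x : ℕ) < (y : ℕ) := hxy
    exact hdec.lt (n - 1 - (y : ℕ)) (n - 1 - (x : ℕ)) (by omega) (by omega) (by omega)
  have hfeq : f = ⇑(Tᶜ.orderEmbOfFin hTc) := Finset.orderEmbOfFin_unique hTc hfmem hfmono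
  refine ⟨T, hT, σ, hσmem, ?_⟩
  apply Equiv.ext
  intro i
  by_cases hik : (i : ℕ) < m - 1
  · have h1 := build_apply_lt n (m - 1) hk T hT σ (i : ℕ) hik i.isLt
    exact h1.trans (hkey ⟨(i : ℕ), hik⟩)
  · have h1 := build_apply_ge n (m - 1) hk T hT σ (i : ℕ) (by omega) i.isLt
    have hxlt : n - 1 - (i : ℕ) < n - (m - 1) := by have := i.isLt; omega
    have h2 : Tᶜ.orderEmbOfFin hTc ⟨n - 1 - (i : ℕ), hxlt⟩ = f ⟨n - 1 - (i : ℕ), hxlt⟩ := by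
      rw [hfeq]
    have h3 : f ⟨n - 1 - (i : ℕ), hxlt⟩ = π i := by
      show π ⟨n - 1 - (n - 1 - (i : ℕ)), by omega⟩ = π i
      have he : n - 1 - (n - 1 - (i : ℕ)) = (i : ℕ) := by have := i.isLt; omega
      exact (papp_congr π _ i.isLt he).trans (congrArg π (Fin.eta i i.isLt))
    exact h1.trans (h2.trans h3)

lemma build_image_mem (n k : ℕ) (hk : k < n) (T : Finset (Fin n)) (hT : T.card = k)
    (σ : Equiv.Perm (Fin k)) (x : Fin n) :
    x ∈ T ↔ ∃ i : Fin k, build n k hk T hT σ ⟨(i : ℕ), by omega⟩ = x := by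
  constructor
  · intro hx
    have h1 : x ∈ Set.range (T.orderEmbOfFin hT) := by
      rw [Finset.range_orderEmbOfFin]; exact hx
    obtain ⟨j, hj⟩ := h1
    refine ⟨σ.symm j, ?_⟩
    rw [build_apply_lt n k hk T hT σ ((σ.symm j : ℕ)) (σ.symm j).isLt (by omega)]
    have h2 : σ ⟨((σ.symm j) : ℕ), (σ.symm j).isLt⟩ = j := by
      rw [Fin.eta]; exact σ.apply_symm_apply j
    rw [h2]; exact hj
  · rintro ⟨i, rfl⟩
    rw [build_apply_lt n k hk T hT σ (i : ℕ) i.isLt (by omega)]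
    exact Finset.orderEmbOfFin_mem T hT _

lemma count (hm : 2 ≤ m) (hmn : m < n) (hb : ∀ p ∈ S₁, 2 ≤ p ∧ p + 2 ≤ m) :
    (Dset n m S₁).ncard = n.choose (m - 1) * (peakSetEq (m - 1) S₁).ncard := by
  have hk : m - 1 < n := by omega
  set G : ({T : Finset (Fin n) // T.card = m - 1} × Equiv.Perm (Fin (m - 1))) →
      Equiv.Perm (Fin n) := fun x => build n (m - 1) hk x.1.1 x.1.2 x.2 with hGdef
  have hGinj : Function.Injective G := by
    rintro ⟨⟨T, hT⟩, σ⟩ ⟨⟨T', hT'⟩, σ'⟩ h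
    simp only [hGdef] at h
    have hTT : T = T' := by
      ext x
      rw [build_image_mem n (m - 1) hk T hT σ x, build_image_mem n (m - 1) hk T' hT' σ' x]
      constructor <;> rintro ⟨i, hi⟩ <;> exact ⟨i, by rw [← hi, h]⟩
    subst hTT
    have hσ : σ = σ' := by
      apply Equiv.ext
      intro i
      have h1 := DFunLike.congr_fun h (⟨(i : ℕ), by omega⟩ : Fin n)
      rw [build_apply_lt n (m - 1) hk T hT σ (i : ℕ) i.isLt (by omega),
        build_apply_lt n (m - 1) hk T hT' σ' (i : ℕ) i.isLt (by omega)] at h1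
      have h2 := (T.orderEmbOfFin hT).injective h1
      have h3 := congrArg Fin.val h2
      exact Fin.ext h3
    subst hσ
    rfl
  have himage : G '' (Set.univ ×ˢ peakSetEq (m - 1) S₁) = Dset n m S₁ := by
    ext π
    constructor
    · rintro ⟨x, hx, rfl⟩
      exact build_mem_Dset hm hmn x.1.1 x.1.2 x.2 hx.2
    · intro hπ
      obtain ⟨T, hT, σ, hσ, hEq⟩ := Dset_subset_image hm hmn π hπ
      exact ⟨⟨⟨T, hT⟩, σ⟩, ⟨Set.mem_univ _, hσ⟩, hEq⟩
  rw [← himage, Set.ncard_image_of_injOn hGinj.injOn,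
    ← Nat.card_coe_set_eq, Nat.card_congr (Equiv.Set.prod _ _), Nat.card_prod,
    Nat.card_coe_set_eq, Nat.card_coe_set_eq, Set.ncard_univ,
    Nat.card_eq_fintype_card, Fintype.card_finset_len, Fintype.card_fin]
end Stmt5


theorem stmt5 (n : ℕ) (S S₁ S₂ : Finset ℕ) (hS : S.Nonempty)
    (hSsub : ∀ x ∈ S, 0 < x ∧ x < n) (hadm : (peakSetEq n S).Nonempty)
    (m : ℕ) (hm : m = S.max' hS) (hS₁ : S₁ = S.erase m) (hS₂ : S₂ = insert (m - 1) S₁) :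
    ((underlineP n S).ncard : ℤ) =
      (n.choose (m - 1) : ℤ) * ((peakSetEq (m - 1) S₁).ncard : ℤ)
        - ((underlineP n S₁).ncard : ℤ) - ((underlineP n S₂).ncard : ℤ) := by
  obtain ⟨π₀, hπ₀⟩ := hadm
  have hπ₀' : ∀ i : ℕ, IsPeak π₀ i ↔ i ∈ S := hπ₀
  have hmS : m ∈ S := hm ▸ S.max'_mem hS
  have hpkm : IsPeak π₀ m := (hπ₀' m).mpr hmS
  have hm2 : 2 ≤ m := by obtain ⟨⟨h1, h2⟩, -⟩ := hpkm; omega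
  have hmn : m < n := (hSsub m hmS).2
  have hmax : ∀ p ∈ S, p ≤ m := by intro p hp; rw [hm]; exact S.le_max' p hp
  have hm1S : m - 1 ∉ S := by
    intro hmem
    obtain ⟨⟨ha1, ha2⟩, hA1, hB1⟩ := (hπ₀' (m - 1)).mpr hmem
    obtain ⟨⟨hb1, hb2⟩, hA2, hB2⟩ := hpkm
    have hx : π₀ ⟨m - 1, by omega⟩ < π₀ ⟨m - 2, by omega⟩ :=
      Stmt5.plt (by omega) (by omega) hB1
    exact absurd hA2 (asymm hx)
  have hb : ∀ p ∈ S₁, 2 ≤ p ∧ p + 2 ≤ m := by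
    intro p hp
    rw [hS₁] at hp
    obtain ⟨hne, hpS⟩ := Finset.mem_erase.mp hp
    have hle := hmax p hpS
    obtain ⟨⟨h1, h2⟩, -⟩ := (hπ₀' p).mpr hpS
    have : p ≠ m - 1 := fun h => hm1S (h ▸ hpS)
    omega
  have hSins : S = insert m S₁ := by rw [hS₁, Finset.insert_erase hmS]
  have key : (underlineP n S).ncard +
      ((underlineP n S₂).ncard + (underlineP n S₁).ncard) =
      n.choose (m - 1) * (peakSetEq (m - 1) S₁).ncard := by
    rw [hSins, hS₂, Stmt5.claimA hm2 hmn hb, Stmt5.claimB hm2 hmn hb,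
      Stmt5.claimC hm2 hmn hb, ← Stmt5.count hm2 hmn hb]
    conv_rhs => rw [Stmt5.Dset_eq_union hm2 hmn]
    rw [Set.ncard_union_eq (Stmt5.disj1 hm2 hmn) (Set.toFinite _) (Set.toFinite _),
      Set.ncard_union_eq (Stmt5.disj23 hm2 hmn) (Set.toFinite _) (Set.toFinite _)]
  zify at key
  linarith [key]
end
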